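/- arXiv:1612.03648 — 4 statements merged into one kernel-verified Lean document; each statement's English description precedes it below -/
import Mathlib

section
/- Let a non-elementary group G act properly by isometries on a proper geodesic metric space (Y,d) with a contracting element, and fix a basepoint o ∈ Y. Then the dead-end depth of points of the orbit G·o is uniformly finite: there exists R > 0 such that for every g ∈ G there is a geodesic ray γ in Y with initial point o satisfying d(g·o, γ) ≤ R. -/
open Metric Set Filter

/-- A geodesic segment in a metric space, parametrized by arc length on `[0, len]`. -/
structure GeodesicSegment (Y : Type*) [MetricSpace Y] where
  len : ℝ
  len_nonneg : 0 ≤ len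
  f : ℝ → Y
  isom : ∀ s ∈ Set.Icc (0 : ℝ) len, ∀ t ∈ Set.Icc (0 : ℝ) len, dist (f s) (f t) = |s - t|

namespace GeodesicSegment

variable {Y : Type*} [MetricSpace Y]

/-- The initial point of a geodesic segment. -/
def source (γ : GeodesicSegment Y) : Y := γ.f 0

/-- The terminal point of a geodesic segment. -/
def target (γ : GeodesicSegment Y) : Y := γ.f γ.len

/-- The image of a geodesic segment. -/
def image (γ : GeodesicSegment Y) : Set Y := γ.f '' Set.Icc 0 γ.len

end GeodesicSegment

/-- A metric space is geodesic if any two points are joined by a geodesic segment. -/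
def GeodesicSpace (Y : Type*) [MetricSpace Y] : Prop :=
  ∀ x y : Y, ∃ γ : GeodesicSegment Y, γ.source = x ∧ γ.target = y

/-- Nearest-point projection of a point to a subset. -/
def proj {Y : Type*} [MetricSpace Y] (X : Set Y) (y : Y) : Set Y :=
  {x | x ∈ X ∧ dist y x = Metric.infDist y X}

/-- Nearest-point projection of a set to a subset. -/
def projSet {Y : Type*} [MetricSpace Y] (X A : Set Y) : Set Y :=
  ⋃ a ∈ A, proj X a

/-- `X` is `C`-contracting: any geodesic at distance at least `C` from `X`
has projection to `X` of diameter at most `C`. -/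
def IsContractingWith {Y : Type*} [MetricSpace Y] (C : ℝ) (X : Set Y) : Prop :=
  ∀ γ : GeodesicSegment Y, (∀ p ∈ γ.image, C ≤ Metric.infDist p X) →
    Metric.diam (projSet X γ.image) ≤ C

/-- `X` is contracting (with respect to geodesics). -/
def IsContracting {Y : Type*} [MetricSpace Y] (X : Set Y) : Prop :=
  ∃ C : ℝ, 1 ≤ C ∧ IsContractingWith C X

/-- The orbit of the basepoint under the cyclic group generated by `h`. -/
def cyclicOrbit {Y G : Type*} [MetricSpace Y] [Group G] [MulAction G Y]
    (o : Y) (h : G) : Set Y :=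
  {y | ∃ n : ℤ, y = h ^ n • o}

/-- `g` is a contracting element for the action with basepoint `o`. -/
def IsContractingElement {Y G : Type*} [MetricSpace Y] [Group G] [MulAction G Y]
    (o : Y) (g : G) : Prop :=
  ¬ IsOfFinOrder g ∧ IsContracting (cyclicOrbit o g) ∧
    ∃ c : ℝ, 1 ≤ c ∧ ∀ m n : ℤ,
      (|m - n| : ℝ) / c - c ≤ dist (g ^ m • o) (g ^ n • o) ∧
        dist (g ^ m • o) (g ^ n • o) ≤ c * (|m - n| : ℝ) + c

/-- A group is non-elementary if it has no finite-index subgroup isomorphic to `ℤ`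
or to the trivial group. -/
def NonElementary (G : Type*) [Group G] : Prop :=
  ¬ ∃ H : Subgroup G, H.index ≠ 0 ∧
    (Nonempty (H ≃* Multiplicative ℤ) ∨ Nonempty (H ≃* PUnit.{1}))

/-- The critical exponent of a subset `Γ ⊆ G` for the action with basepoint `o`. -/
noncomputable def critExp {Y G : Type*} [MetricSpace Y] [Group G] [MulAction G Y]
    (o : Y) (Γ : Set G) : ℝ :=
  Filter.limsup
    (fun n : ℕ => Real.log ({g ∈ Γ | dist o (g • o) ≤ (n : ℝ)}.ncard) / (n : ℝ))
    Filter.atTop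

/-- The concave region `𝒪_M`: elements `g` such that some geodesic between
`B(o,M)` and `B(g·o,M)` has its interior outside the `M`-neighborhood of the orbit. -/
def concaveRegion {Y : Type*} (G : Type*) [MetricSpace Y] [Group G] [MulAction G Y]
    (o : Y) (M : ℝ) : Set G :=
  {g | ∃ γ : GeodesicSegment Y,
    γ.source ∈ Metric.closedBall o M ∧ γ.target ∈ Metric.closedBall (g • o) M ∧
    ∀ t ∈ Set.Ioo (0 : ℝ) γ.len, M < Metric.infDist (γ.f t) (MulAction.orbit G o)}

/-- Statistically convex-cocompact (SCC) action. -/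
def IsSCC {Y : Type*} (G : Type*) [MetricSpace Y] [Group G] [MulAction G Y]
    (o : Y) : Prop :=
  ∃ M : ℝ, 0 < M ∧ critExp o (concaveRegion G o M) < critExp o (Set.univ : Set G)

/-- A geodesic contains no `(ε, f)`-barrier. -/
def BarrierFree {Y G : Type*} [MetricSpace Y] [Group G] [MulAction G Y]
    (o : Y) (ε : ℝ) (f : G) (γ : GeodesicSegment Y) : Prop :=
  ¬ ∃ h : G, Metric.infDist (h • o) γ.image ≤ ε ∧
      Metric.infDist ((h * f) • o) γ.image ≤ ε

/-- The set `𝒱_{ε,M,f}` of `(ε, M, f)`-barrier-free elements. -/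
def barrierFreeSet {Y G : Type*} [MetricSpace Y] [Group G] [MulAction G Y]
    (o : Y) (ε M : ℝ) (f : G) : Set G :=
  {g | ∃ γ : GeodesicSegment Y, γ.source ∈ Metric.closedBall o M ∧
    γ.target ∈ Metric.closedBall (g • o) M ∧ BarrierFree o ε f γ}

/-- The subgroup-like set `E(h)` of elements commensurating the orbit of `⟨h⟩`. -/
def Egroup {Y G : Type*} [MetricSpace Y] [Group G] [MulAction G Y]
    (o : Y) (h : G) : Set G :=
  {g | ∃ r : ℝ, 0 < r ∧
    (∀ y ∈ (g • ·) '' cyclicOrbit o h, Metric.infDist y (cyclicOrbit o h) ≤ r) ∧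
    (∀ y ∈ cyclicOrbit o h, Metric.infDist y ((g • ·) '' cyclicOrbit o h) ≤ r)}

/-- The axis `Ax(h) = E(h)·o` of a contracting element. -/
def axisSet {Y G : Type*} [MetricSpace Y] [Group G] [MulAction G Y]
    (o : Y) (h : G) : Set Y :=
  (fun g : G => g • o) '' Egroup o h

section Helpers
variable {Y : Type*} [MetricSpace Y]

lemma le_infDist_of_forall {s : Set Y} {x : Y} {b : ℝ} (hs : s.Nonempty)
    (h : ∀ y ∈ s, b ≤ dist x y) : b ≤ Metric.infDist x s := by
  by_contra hlt
  push_neg at hlt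
  obtain ⟨y, hy, hd⟩ := (Metric.infDist_lt_iff hs).1 hlt
  exact absurd (h y hy) (by linarith)

lemma abs_min_sub_min_le (a b L : ℝ) : |min a L - min b L| ≤ |a - b| := by
  simp only [min_def]
  split_ifs <;> (rw [abs_le]; constructor <;>
    linarith [neg_abs_le (a - b), le_abs_self (a - b)])

lemma abs_max_sub_max_le (c a b : ℝ) : |max c a - max c b| ≤ |a - b| := by
  simp only [max_def]
  split_ifs <;> (rw [abs_le]; constructor <;>
    linarith [neg_abs_le (a - b), le_abs_self (a - b)])

lemma clusterPt_mem_of_isClosed {X : Type*} [TopologicalSpace X] {a : X} {F : Filter X}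
    (h : ClusterPt a F) {E : Set X} (hE : E ∈ F) (hcl : IsClosed E) : a ∈ E := by
  have h1 : ClusterPt a (𝓟 E) := h.mono (Filter.le_principal_iff.2 hE)
  have h2 : a ∈ closure E := mem_closure_iff_clusterPt.2 h1
  rwa [hcl.closure_eq] at h2

def gsSub (σ : GeodesicSegment Y) (u v : ℝ) (h0 : 0 ≤ u) (huv : u ≤ v)
    (hv : v ≤ σ.len) : GeodesicSegment Y where
  len := v - u
  len_nonneg := by linarith
  f := fun t => σ.f (u + t)
  isom := by
    intro s hs t ht
    rw [σ.isom (u + s) ⟨by linarith [hs.1], by linarith [hs.2]⟩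
      (u + t) ⟨by linarith [ht.1], by linarith [ht.2]⟩, add_sub_add_left_eq_sub]

lemma gsSub_image (σ : GeodesicSegment Y) (u v : ℝ) (h0 : 0 ≤ u) (huv : u ≤ v)
    (hv : v ≤ σ.len) : (gsSub σ u v h0 huv hv).image = σ.f '' Set.Icc u v := by
  show (fun t => σ.f (u + t)) '' Set.Icc 0 (v - u) = σ.f '' Set.Icc u v
  rw [← Set.image_image σ.f (fun t => u + t), Set.image_const_add_Icc]
  have h1 : u + 0 = u := by ring
  have h2 : u + (v - u) = v := by ring
  rw [h1, h2]

def gsMap (σ : GeodesicSegment Y) (φ : Y → Y) (hφ : Isometry φ) : GeodesicSegment Y where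
  len := σ.len
  len_nonneg := σ.len_nonneg
  f := fun t => φ (σ.f t)
  isom := by
    intro s hs t ht
    rw [hφ.dist_eq]
    exact σ.isom s hs t ht

lemma gsMap_image (σ : GeodesicSegment Y) (φ : Y → Y) (hφ : Isometry φ) :
    (gsMap σ φ hφ).image = φ '' σ.image := by
  show (fun t => φ (σ.f t)) '' Set.Icc 0 σ.len = φ '' (σ.f '' Set.Icc 0 σ.len)
  rw [Set.image_image]

lemma infDist_image_le {φ : Y → Y} (hφ : Isometry φ) (y : Y) {s : Set Y} (hs : s.Nonempty)
    {b : ℝ} (hb : Metric.infDist y s ≤ b) : Metric.infDist (φ y) (φ '' s) ≤ b := by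
  refine le_of_forall_pos_le_add fun ε hε => ?_
  have hlt : Metric.infDist y s < b + ε := by linarith
  obtain ⟨w, hw, hwd⟩ := (Metric.infDist_lt_iff hs).1 hlt
  have : dist (φ y) (φ w) < b + ε := by rwa [hφ.dist_eq]
  exact le_trans (Metric.infDist_le_dist_of_mem ⟨w, hw, rfl⟩) this.le

lemma exists_proj_index (c : ℝ) (hc : 1 ≤ c) (e : ℤ → Y)
    (hlow : ∀ m n : ℤ, |(m : ℝ) - n| / c - c ≤ dist (e m) (e n))
    (y : Y) : ∃ j : ℤ, dist y (e j) = Metric.infDist y {z | ∃ i : ℤ, z = e i} := by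
  have hc0 : (0 : ℝ) < c := by linarith
  set A : Set Y := {z | ∃ i : ℤ, z = e i} with hA
  have hAne : A.Nonempty := ⟨e 0, 0, rfl⟩
  set r := dist y (e 0) with hr
  set S : Set ℤ := {j | dist y (e j) ≤ r} with hS
  have hS0 : (0 : ℤ) ∈ S := le_refl r
  have hfin : S.Finite := by
    apply Set.Finite.subset (Set.finite_Icc (-(⌈(2 * r + c) * c⌉)) ⌈(2 * r + c) * c⌉)
    intro j hj
    have h1 := hlow 0 j
    have h2 : dist (e 0) (e j) ≤ 2 * r := by
      calc dist (e 0) (e j) ≤ dist (e 0) y + dist y (e j) := dist_triangle _ _ _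
        _ ≤ 2 * r := by rw [dist_comm (e 0) y]; have := hj; simp only [hS, mem_setOf_eq] at this; linarith
    have h3 : |((0 : ℤ) : ℝ) - j| ≤ (2 * r + c) * c := by
      have h4 : |((0 : ℤ) : ℝ) - j| / c ≤ 2 * r + c := by linarith
      calc |((0 : ℤ) : ℝ) - j| = |((0 : ℤ) : ℝ) - j| / c * c := by field_simp
        _ ≤ (2 * r + c) * c := mul_le_mul_of_nonneg_right h4 hc0.le
    have h5 : |(j : ℝ)| ≤ ((⌈(2 * r + c) * c⌉ : ℤ) : ℝ) := by
      have := Int.le_ceil ((2 * r + c) * c)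
      simp only [Int.cast_zero, zero_sub, abs_neg] at h3
      linarith
    have h6 : |j| ≤ ⌈(2 * r + c) * c⌉ := by exact_mod_cast h5
    exact ⟨neg_le_of_abs_le h6, le_of_abs_le h6⟩
  obtain ⟨j₀, hj₀S, hmin⟩ := Set.exists_min_image S (fun j => dist y (e j)) hfin ⟨0, hS0⟩
  refine ⟨j₀, le_antisymm ?_ (Metric.infDist_le_dist_of_mem ⟨j₀, rfl⟩)⟩
  refine le_infDist_of_forall hAne ?_
  rintro z ⟨i, rfl⟩
  by_cases hi : i ∈ S
  · exact hmin i hi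
  · have h1 : r < dist y (e i) := by
      by_contra hle; push_neg at hle; exact hi hle
    exact le_trans (le_trans (hmin 0 hS0) (le_refl r)) h1.le

end Helpers
section MainLemma
variable {Y : Type*} [MetricSpace Y]

lemma main_lemma (C c : ℝ) (hC : 1 ≤ C) (hc : 1 ≤ c) (e : ℤ → Y)
    (hQIl : ∀ m n : ℤ, |(m : ℝ) - n| / c - c ≤ dist (e m) (e n))
    (hQIu : ∀ m n : ℤ, dist (e m) (e n) ≤ c * |(m : ℝ) - n| + c)
    (hcon : IsContractingWith C {z | ∃ i : ℤ, z = e i})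
    (x : Y) (k : ℤ) (hk0 : k ≤ 0)
    (hkproj : dist x (e k) = Metric.infDist x {z | ∃ i : ℤ, z = e i})
    (n : ℤ) (hn : c * c ≤ (n : ℝ))
    (σ : GeodesicSegment Y) (hs0 : σ.f 0 = x) (hsl : σ.f σ.len = e n) :
    Metric.infDist (e 0) σ.image ≤
      c * (c * (3 * C + c) + c * (8 * C + 1 + c)) + c + 4 * C := by
  have hc0 : (0 : ℝ) < c := by linarith
  have hC0 : (0 : ℝ) < C := by linarith
  set A : Set Y := {z | ∃ i : ℤ, z = e i} with hA
  have hAne : A.Nonempty := ⟨e 0, 0, rfl⟩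
  set L := σ.len with hLdef
  have hL : 0 ≤ L := σ.len_nonneg
  set φ : ℝ → ℝ := fun t => Metric.infDist (σ.f t) A with hφdef
  -- basic facts about φ
  have hφlip : ∀ s ∈ Icc (0:ℝ) L, ∀ t ∈ Icc (0:ℝ) L, |φ s - φ t| ≤ |s - t| := by
    intro s hs t ht
    have h1 := (Metric.lipschitz_infDist_pt A).dist_le_mul (σ.f s) (σ.f t)
    rw [σ.isom s hs t ht] at h1
    rw [Real.dist_eq] at h1
    simpa using h1
  have hσcont : ContinuousOn σ.f (Icc (0:ℝ) L) := by
    refine (LipschitzOnWith.of_dist_le_mul (K := 1) ?_).continuousOn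
    intro s hs t ht
    rw [σ.isom s hs t ht, Real.dist_eq]
    simp
  have hφcont : ContinuousOn φ (Icc (0:ℝ) L) :=
    (Metric.lipschitz_infDist_pt A).continuous.comp_continuousOn hσcont
  have hφL : φ L = 0 := by
    simp only [hφdef]
    rw [hsl]
    exact Metric.infDist_zero_of_mem ⟨n, rfl⟩
  have hφ0 : φ 0 = dist x (e k) := by
    simp only [hφdef]; rw [hs0]; exact hkproj.symm
  have hproj : ∀ y : Y, ∃ j : ℤ, dist y (e j) = Metric.infDist y A :=
    exists_proj_index c hc e hQIl
  -- key: projections of far subsegments have diameter ≤ C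
  have key : ∀ u v, 0 ≤ u → u ≤ v → v ≤ L → (∀ s, s ∈ Icc u v → C ≤ φ s) →
      ∀ p q : Y, (p ∈ A ∧ dist (σ.f u) p = φ u) → (q ∈ A ∧ dist (σ.f v) q = φ v) →
      dist p q ≤ C := by
    intro u v h0 huv hv hφC p q hp hq
    have him : (gsSub σ u v h0 huv hv).image = σ.f '' Icc u v := gsSub_image σ u v h0 huv hv
    have hd := hcon (gsSub σ u v h0 huv hv) (by
      rw [him]
      rintro w ⟨s, hsmem, rfl⟩
      exact hφC s hsmem)
    have hbdd : Bornology.IsBounded (projSet A (gsSub σ u v h0 huv hv).image) := by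
      apply (Metric.isBounded_closedBall (x := e 0) (r := 2 * (L + dist x (e 0)))).subset
      intro w hw
      simp only [projSet, Set.mem_iUnion] at hw
      obtain ⟨b, hb, hwA, hwd⟩ := hw
      rw [him] at hb
      obtain ⟨s, hsmem, rfl⟩ := hb
      have h2 : Metric.infDist (σ.f s) A ≤ dist (σ.f s) (e 0) :=
        Metric.infDist_le_dist_of_mem ⟨0, rfl⟩
      have h3 : dist (σ.f s) x ≤ L := by
        rw [← hs0, σ.isom s ⟨le_trans h0 hsmem.1, le_trans hsmem.2 hv⟩ 0 ⟨le_refl 0, hL⟩]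
        rw [sub_zero, abs_of_nonneg (le_trans h0 hsmem.1)]
        exact le_trans hsmem.2 hv
      have h4 : dist (σ.f s) (e 0) ≤ L + dist x (e 0) :=
        le_trans (dist_triangle (σ.f s) x (e 0)) (by linarith)
      rw [Metric.mem_closedBall]
      calc dist w (e 0) ≤ dist w (σ.f s) + dist (σ.f s) (e 0) := dist_triangle _ _ _
        _ ≤ 2 * (L + dist x (e 0)) := by
            rw [dist_comm w (σ.f s)]
            rw [hwd]
            linarith [le_trans h2 h4]
    have hpm : p ∈ projSet A (gsSub σ u v h0 huv hv).image := by
      simp only [projSet, Set.mem_iUnion]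
      exact ⟨σ.f u, by rw [him]; exact ⟨u, ⟨le_refl u, huv⟩, rfl⟩, hp.1, hp.2⟩
    have hqm : q ∈ projSet A (gsSub σ u v h0 huv hv).image := by
      simp only [projSet, Set.mem_iUnion]
      exact ⟨σ.f v, by rw [him]; exact ⟨v, ⟨huv, le_refl v⟩, rfl⟩, hq.1, hq.2⟩
    exact le_trans (Metric.dist_le_diam_of_mem hbdd hpm hqm) hd
  -- entrance time
  set T : Set ℝ := Icc (0:ℝ) L ∩ φ ⁻¹' (Iic C) with hT
  have hTne : T.Nonempty := ⟨L, ⟨hL, le_refl L⟩, by rw [Set.mem_preimage, hφL]; exact Set.mem_Iic.2 (by linarith)⟩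
  have hTclosed : IsClosed T := hφcont.preimage_isClosed_of_isClosed isClosed_Icc isClosed_Iic
  have hTcpt : IsCompact T := isCompact_of_isClosed_isBounded hTclosed
    ((Metric.isBounded_Icc 0 L).subset inter_subset_left)
  set t₀ := sInf T with ht₀def
  have ht₀T : t₀ ∈ T := hTcpt.sInf_mem hTne
  have ht₀mem : t₀ ∈ Icc (0:ℝ) L := ht₀T.1
  have hφt₀ : φ t₀ ≤ C := ht₀T.2
  have hbefore : ∀ s, 0 ≤ s → s < t₀ → C < φ s := by
    intro s h1 h2
    by_contra hle
    push_neg at hle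
    have hsT : s ∈ T := ⟨⟨h1, le_trans h2.le ht₀mem.2⟩, hle⟩
    exact absurd (csInf_le hTcpt.bddBelow hsT) (not_le.2 h2)
  -- Step A : dist (σ.f t₀) (e k) ≤ 2C
  have hstepA : dist (σ.f t₀) (e k) ≤ 2 * C := by
    rcases eq_or_lt_of_le ht₀mem.1 with h0 | h0
    · have : dist (σ.f t₀) (e k) = φ t₀ := by
        rw [← h0]
        simp only [hφdef]
        rw [hs0]
        exact hkproj
      rw [this]; linarith
    · refine le_of_forall_pos_le_add fun ε hε => ?_
      set δ := min (ε / 2) t₀ with hδdef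
      have hδ0 : 0 < δ := lt_min (by linarith) h0
      have hδt : δ ≤ t₀ := min_le_right _ _
      have hδε : 2 * δ ≤ ε := by
        have := min_le_left (ε / 2) t₀
        simp only [hδdef]; linarith [min_le_left (ε / 2) t₀]
      obtain ⟨j₁, hj₁⟩ := hproj (σ.f (t₀ - δ))
      have hkey := key 0 (t₀ - δ) le_rfl (by linarith) (by linarith [ht₀mem.2])
        (fun s hs => (hbefore s hs.1 (by linarith [hs.2])).le) (e k) (e j₁)
        ⟨⟨k, rfl⟩, by simp only [hφdef]; rw [hs0]; exact hkproj⟩ ⟨⟨j₁, rfl⟩, hj₁⟩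
      have h1 : dist (σ.f t₀) (σ.f (t₀ - δ)) = δ := by
        rw [σ.isom t₀ ht₀mem (t₀ - δ) ⟨by linarith, by linarith [ht₀mem.2]⟩]
        rw [abs_of_nonneg (by linarith : (0:ℝ) ≤ t₀ - (t₀ - δ))]
        ring
      have h3 : φ (t₀ - δ) ≤ C + δ := by
        have := hφlip (t₀ - δ) ⟨by linarith, by linarith [ht₀mem.2]⟩ t₀ ht₀mem
        have habs := abs_le.1 this
        have : |t₀ - δ - t₀| = δ := by
          rw [show t₀ - δ - t₀ = -δ by ring, abs_neg, abs_of_nonneg hδ0.le]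
        linarith [habs.1, habs.2, this ▸ habs.2]
      calc dist (σ.f t₀) (e k) ≤
          dist (σ.f t₀) (σ.f (t₀ - δ)) + dist (σ.f (t₀ - δ)) (e j₁) + dist (e j₁) (e k) :=
            dist_triangle4 _ _ _ _
        _ ≤ δ + (C + δ) + C := by
            rw [h1, dist_comm (e j₁) (e k)]
            have h2 : dist (σ.f (t₀ - δ)) (e j₁) = φ (t₀ - δ) := hj₁
            rw [h2]
            linarith [hkey]
        _ ≤ 2 * C + ε := by linarith
  -- Step B : φ ≤ 4C on [t₀, L]
  have hstepB : ∀ t, t₀ ≤ t → t ≤ L → φ t ≤ 4 * C := by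
    intro t htt₀ htL
    by_cases hCt : φ t ≤ C
    · linarith
    push_neg at hCt
    have htL' : t < L := lt_of_le_of_ne htL (fun h => by rw [h, hφL] at hCt; linarith)
    have ht₀t : t₀ < t := lt_of_le_of_ne htt₀ (fun h => by rw [← h] at hCt; linarith)
    have ht0 : 0 ≤ t := le_trans ht₀mem.1 htt₀
    set Su : Set ℝ := Icc t₀ t ∩ φ ⁻¹' (Iic C) with hSu
    set Sv : Set ℝ := Icc t L ∩ φ ⁻¹' (Iic C) with hSv
    have hsubu : Icc t₀ t ⊆ Icc (0:ℝ) L := Icc_subset_Icc ht₀mem.1 htL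
    have hsubv : Icc t L ⊆ Icc (0:ℝ) L := Icc_subset_Icc ht0 le_rfl
    have hSucpt : IsCompact Su := isCompact_of_isClosed_isBounded
      ((hφcont.mono hsubu).preimage_isClosed_of_isClosed isClosed_Icc isClosed_Iic)
      ((Metric.isBounded_Icc t₀ t).subset inter_subset_left)
    have hSvcpt : IsCompact Sv := isCompact_of_isClosed_isBounded
      ((hφcont.mono hsubv).preimage_isClosed_of_isClosed isClosed_Icc isClosed_Iic)
      ((Metric.isBounded_Icc t L).subset inter_subset_left)
    have hSune : Su.Nonempty := ⟨t₀, ⟨le_rfl, ht₀t.le⟩, hφt₀⟩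
    have hSvne : Sv.Nonempty := ⟨L, ⟨htL, le_rfl⟩, by
      rw [Set.mem_preimage, hφL]; exact Set.mem_Iic.2 (by linarith)⟩
    set u := sSup Su with hudef
    set v := sInf Sv with hvdef
    have huS : u ∈ Su := hSucpt.sSup_mem hSune
    have hvS : v ∈ Sv := hSvcpt.sInf_mem hSvne
    have hut : u < t := lt_of_le_of_ne huS.1.2 (fun h => by
      have := huS.2; rw [h] at this; exact absurd this (not_le.2 hCt))
    have htv : t < v := lt_of_le_of_ne hvS.1.1 (fun h => by
      have := hvS.2; rw [← h] at this; exact absurd this (not_le.2 hCt))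
    have hu0 : 0 ≤ u := le_trans ht₀mem.1 huS.1.1
    have hvL : v ≤ L := hvS.1.2
    have hmid : ∀ s, u < s → s < v → C < φ s := by
      intro s hs1 hs2
      rcases le_total s t with hst | hst
      · by_contra hle
        push_neg at hle
        have : s ∈ Su := ⟨⟨le_trans huS.1.1 hs1.le, hst⟩, hle⟩
        exact absurd (le_csSup hSucpt.bddAbove this) (not_le.2 hs1)
      · by_contra hle
        push_neg at hle
        have : s ∈ Sv := ⟨⟨hst, le_trans hs2.le hvL⟩, hle⟩
        exact absurd (csInf_le hSvcpt.bddBelow this) (not_le.2 hs2)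
    have hvu : v - u ≤ 3 * C := by
      refine le_of_forall_pos_le_add fun ε hε => ?_
      set δ := min (ε / 4) ((v - u) / 4) with hδdef
      have hvu0 : 0 < v - u := by linarith
      have hδ0 : 0 < δ := lt_min (by linarith) (by linarith)
      have hδ1 : δ ≤ ε / 4 := min_le_left _ _
      have hδ2 : δ ≤ (v - u) / 4 := min_le_right _ _
      have huv2 : u + δ ≤ v - δ := by linarith
      obtain ⟨j₁, hj₁⟩ := hproj (σ.f (u + δ))
      obtain ⟨j₂, hj₂⟩ := hproj (σ.f (v - δ))
      have hkey := key (u + δ) (v - δ) (by linarith) huv2 (by linarith)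
        (fun s hs => (hmid s (by linarith [hs.1]) (by linarith [hs.2])).le)
        (e j₁) (e j₂) ⟨⟨j₁, rfl⟩, hj₁⟩ ⟨⟨j₂, rfl⟩, hj₂⟩
      have hmem1 : u + δ ∈ Icc (0:ℝ) L := ⟨by linarith, by linarith⟩
      have hmem2 : v - δ ∈ Icc (0:ℝ) L := ⟨by linarith, by linarith⟩
      have hd : dist (σ.f (u + δ)) (σ.f (v - δ)) = (v - δ) - (u + δ) := by
        rw [σ.isom _ hmem1 _ hmem2, abs_of_nonpos (by linarith)]
        ring
      have humem : u ∈ Icc (0:ℝ) L := ⟨hu0, by linarith⟩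
      have hvmem : v ∈ Icc (0:ℝ) L := ⟨by linarith, hvL⟩
      have hφu : φ u ≤ C := huS.2
      have hφv : φ v ≤ C := hvS.2
      have hφuδ : φ (u + δ) ≤ C + δ := by
        have hh := abs_le.1 (hφlip (u + δ) hmem1 u humem)
        have habs : |u + δ - u| = δ := by
          rw [show u + δ - u = δ by ring, abs_of_nonneg hδ0.le]
        linarith [hh.2, habs, hφu]
      have hφvδ : φ (v - δ) ≤ C + δ := by
        have hh := abs_le.1 (hφlip (v - δ) hmem2 v hvmem)
        have habs : |v - δ - v| = δ := by
          rw [show v - δ - v = -δ by ring, abs_neg, abs_of_nonneg hδ0.le]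
        linarith [hh.2, habs, hφv]
      have htri : dist (σ.f (u + δ)) (σ.f (v - δ)) ≤
          dist (σ.f (u + δ)) (e j₁) + dist (e j₁) (e j₂) + dist (e j₂) (σ.f (v - δ)) :=
        dist_triangle4 _ _ _ _
      rw [hd, hj₁, dist_comm (e j₂) (σ.f (v - δ)), hj₂] at htri
      linarith [hkey]
    have hφu : φ u ≤ C := huS.2
    have hh := abs_le.1 (hφlip t ⟨ht0, htL⟩ u ⟨hu0, by linarith⟩)
    have habs : |t - u| = t - u := abs_of_nonneg (by linarith)
    have h1 : φ t ≤ φ u + (t - u) := by linarith [hh.2, habs]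
    linarith [hφu]
  -- index function along the geodesic
  choose Jy hJy using hproj
  set Jt : ℝ → ℤ := fun t => Jy (σ.f t) with hJt
  have hJd : ∀ t, dist (σ.f t) (e (Jt t)) = φ t := fun t => hJy (σ.f t)
  have hgap : ∀ s t, t₀ ≤ s → s ≤ L → t₀ ≤ t → t ≤ L →
      |(Jt s : ℝ) - (Jt t : ℝ)| ≤ c * (8 * C + |s - t| + c) := by
    intro s t hs1 hs2 ht1 ht2
    have hds : dist (σ.f s) (e (Jt s)) ≤ 4 * C := by rw [hJd]; exact hstepB s hs1 hs2
    have hdt : dist (σ.f t) (e (Jt t)) ≤ 4 * C := by rw [hJd]; exact hstepB t ht1 ht2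
    have hst : dist (σ.f s) (σ.f t) = |s - t| :=
      σ.isom s ⟨le_trans ht₀mem.1 hs1, hs2⟩ t ⟨le_trans ht₀mem.1 ht1, ht2⟩
    have hd : dist (e (Jt s)) (e (Jt t)) ≤ 8 * C + |s - t| := by
      calc dist (e (Jt s)) (e (Jt t)) ≤
          dist (e (Jt s)) (σ.f s) + dist (σ.f s) (σ.f t) + dist (σ.f t) (e (Jt t)) :=
            dist_triangle4 _ _ _ _
        _ ≤ 8 * C + |s - t| := by
            rw [dist_comm (e (Jt s)) (σ.f s), hst]; linarith
    have h1 := hQIl (Jt s) (Jt t)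
    have h2 : |(Jt s : ℝ) - (Jt t : ℝ)| / c ≤ 8 * C + |s - t| + c := by linarith
    calc |(Jt s : ℝ) - (Jt t : ℝ)| = |(Jt s : ℝ) - (Jt t : ℝ)| / c * c := by field_simp
      _ ≤ (8 * C + |s - t| + c) * c := mul_le_mul_of_nonneg_right h2 hc0.le
      _ = c * (8 * C + |s - t| + c) := by ring
  have hinit : (Jt t₀ : ℝ) ≤ c * (3 * C + c) := by
    have hd : dist (e (Jt t₀)) (e k) ≤ 3 * C := by
      calc dist (e (Jt t₀)) (e k) ≤ dist (e (Jt t₀)) (σ.f t₀) + dist (σ.f t₀) (e k) :=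
            dist_triangle _ _ _
        _ ≤ 3 * C := by
            rw [dist_comm (e (Jt t₀)) (σ.f t₀), hJd]
            linarith [hφt₀, hstepA]
    have h1 := hQIl (Jt t₀) k
    have h2 : |(Jt t₀ : ℝ) - (k : ℝ)| ≤ c * (3 * C + c) := by
      have h3 : |(Jt t₀ : ℝ) - (k : ℝ)| / c ≤ 3 * C + c := by linarith
      calc |(Jt t₀ : ℝ) - (k : ℝ)| = |(Jt t₀ : ℝ) - (k : ℝ)| / c * c := by field_simp
        _ ≤ (3 * C + c) * c := mul_le_mul_of_nonneg_right h3 hc0.le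
        _ = c * (3 * C + c) := by ring
    have hk' : (k : ℝ) ≤ 0 := by exact_mod_cast hk0
    linarith [(abs_le.1 h2).2]
  have hfinal : (0 : ℤ) ≤ Jt L := by
    have h1 : dist (σ.f L) (e (Jt L)) = 0 := by rw [hJd, hφL]
    have h2 : dist (e (Jt L)) (e n) ≤ 0 := by
      calc dist (e (Jt L)) (e n) ≤ dist (e (Jt L)) (σ.f L) + dist (σ.f L) (e n) :=
            dist_triangle _ _ _
        _ ≤ 0 := by rw [dist_comm (e (Jt L)) (σ.f L), h1, hsl, dist_self]; norm_num
    have h3 := hQIl (Jt L) n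
    have h4 : |(Jt L : ℝ) - (n : ℝ)| ≤ c * c := by
      have h5 : |(Jt L : ℝ) - (n : ℝ)| / c ≤ c := by linarith
      calc |(Jt L : ℝ) - (n : ℝ)| = |(Jt L : ℝ) - (n : ℝ)| / c * c := by field_simp
        _ ≤ c * c := mul_le_mul_of_nonneg_right h5 hc0.le
    have h6 : (n : ℝ) - c * c ≤ (Jt L : ℝ) := by linarith [(abs_le.1 h4).1]
    have h7 : (0 : ℝ) ≤ (Jt L : ℝ) := by linarith
    exact_mod_cast h7
  -- the discrete walk
  set tt : ℕ → ℝ := fun i => min (t₀ + i) L with htt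
  have htt_mem : ∀ i : ℕ, t₀ ≤ tt i ∧ tt i ≤ L := by
    intro i
    have h0 : (0:ℝ) ≤ (i:ℝ) := Nat.cast_nonneg i
    exact ⟨le_min (by linarith) ht₀mem.2, min_le_right _ _⟩
  have htt0 : ∀ i : ℕ, 0 ≤ tt i := fun i => le_trans ht₀mem.1 (htt_mem i).1
  set N : ℕ := ⌈L - t₀⌉₊ with hN
  have httN : tt N = L := by
    have h1 : L - t₀ ≤ (N : ℝ) := Nat.le_ceil _
    exact min_eq_right (by linarith)
  have hstep1 : ∀ i : ℕ, |tt (i + 1) - tt i| ≤ 1 := by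
    intro i
    have h1 := abs_min_sub_min_le (t₀ + ((i:ℝ) + 1)) (t₀ + (i:ℝ)) L
    have h2 : t₀ + ((i:ℝ) + 1) - (t₀ + (i:ℝ)) = 1 := by ring
    rw [h2] at h1
    have h3 : tt (i + 1) = min (t₀ + ((i:ℝ) + 1)) L := by
      simp only [htt]
      norm_num
    rw [h3]
    simpa using h1
  have hex : ∃ i : ℕ, 0 ≤ Jt (tt i) := ⟨N, by rw [httN]; exact hfinal⟩
  obtain ⟨i₀, hi₀, hleast⟩ : ∃ i₀ : ℕ, ((0:ℤ) ≤ Jt (tt i₀)) ∧ ∀ j < i₀, ¬ ((0:ℤ) ≤ Jt (tt j)) :=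
    ⟨Nat.find hex, Nat.find_spec hex, fun j hj => Nat.find_min hex hj⟩
  have hB₀nn : (0:ℝ) ≤ c * (3 * C + c) := by positivity
  have hs₀nn : (0:ℝ) ≤ c * (8 * C + 1 + c) := by positivity
  have hbound : (Jt (tt i₀) : ℝ) ≤ c * (3 * C + c) + c * (8 * C + 1 + c) := by
    rcases Nat.eq_zero_or_pos i₀ with hz | hpos
    · have h1 : tt i₀ = t₀ := by
        rw [hz]
        simp only [htt]
        norm_num
        exact ht₀mem.2
      rw [h1]
      linarith [hinit]
    · obtain ⟨i, rfl⟩ : ∃ i, i₀ = i + 1 := ⟨i₀ - 1, (Nat.succ_pred_eq_of_pos hpos).symm⟩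
      have hneg : ¬ (0 : ℤ) ≤ Jt (tt i) := hleast i (Nat.lt_succ_self i)
      push_neg at hneg
      have h1 : ((Jt (tt i) : ℤ) : ℝ) ≤ 0 := by exact_mod_cast hneg.le
      have h2 := hgap (tt (i + 1)) (tt i) (htt_mem (i+1)).1 (htt_mem (i+1)).2
        (htt_mem i).1 (htt_mem i).2
      have h3 : c * (8 * C + |tt (i + 1) - tt i| + c) ≤ c * (8 * C + 1 + c) := by
        apply mul_le_mul_of_nonneg_left _ hc0.le
        linarith [hstep1 i]
      have h4 := (abs_le.1 h2).2
      linarith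
  -- conclusion
  have htmem : tt i₀ ∈ Icc (0:ℝ) L := ⟨htt0 i₀, (htt_mem i₀).2⟩
  have hmem : σ.f (tt i₀) ∈ σ.image := ⟨tt i₀, htmem, rfl⟩
  have h1 : dist (e 0) (e (Jt (tt i₀))) ≤ c * (Jt (tt i₀) : ℝ) + c := by
    have := hQIu 0 (Jt (tt i₀))
    have habs : |((0:ℤ) : ℝ) - (Jt (tt i₀) : ℝ)| = (Jt (tt i₀) : ℝ) := by
      rw [Int.cast_zero, zero_sub, abs_neg, abs_of_nonneg (by exact_mod_cast hi₀)]
    rw [habs] at this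
    exact this
  have h2 : dist (e (Jt (tt i₀))) (σ.f (tt i₀)) ≤ 4 * C := by
    rw [dist_comm, hJd]
    exact hstepB (tt i₀) (htt_mem i₀).1 (htt_mem i₀).2
  have h3 : dist (e 0) (σ.f (tt i₀)) ≤
      c * (c * (3 * C + c) + c * (8 * C + 1 + c)) + c + 4 * C := by
    calc dist (e 0) (σ.f (tt i₀)) ≤
        dist (e 0) (e (Jt (tt i₀))) + dist (e (Jt (tt i₀))) (σ.f (tt i₀)) := dist_triangle _ _ _
      _ ≤ c * (Jt (tt i₀) : ℝ) + c + 4 * C := by linarith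
      _ ≤ c * (c * (3 * C + c) + c * (8 * C + 1 + c)) + c + 4 * C := by
          have := mul_le_mul_of_nonneg_left hbound hc0.le
          linarith
  exact le_trans (Metric.infDist_le_dist_of_mem hmem) h3
end MainLemma

section Wrapper
variable {Y : Type*} [MetricSpace Y]

lemma exists_far_target (C c : ℝ) (hC : 1 ≤ C) (hc : 1 ≤ c) (e : ℤ → Y)
    (hQIl : ∀ m n : ℤ, |(m : ℝ) - n| / c - c ≤ dist (e m) (e n))
    (hQIu : ∀ m n : ℤ, dist (e m) (e n) ≤ c * |(m : ℝ) - n| + c)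
    (hcon : IsContractingWith C {z | ∃ i : ℤ, z = e i})
    (x : Y) (D : ℝ) (hD : 0 ≤ D) :
    ∃ z : Y, D ≤ dist (e 0) z ∧ ∀ σ : GeodesicSegment Y, σ.f 0 = x → σ.f σ.len = z →
      Metric.infDist (e 0) σ.image ≤
        c * (c * (3 * C + c) + c * (8 * C + 1 + c)) + c + 4 * C := by
  have hc0 : (0 : ℝ) < c := by linarith
  obtain ⟨k, hk⟩ := exists_proj_index c hc e hQIl x
  set m : ℤ := ⌈c * (D + c) + c * c⌉ with hm
  have hm1 : c * c ≤ (m : ℝ) := by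
    have h1 := Int.le_ceil (c * (D + c) + c * c)
    nlinarith
  have hm2 : c * (D + c) ≤ (m : ℝ) := by
    have h1 := Int.le_ceil (c * (D + c) + c * c)
    nlinarith
  have hm0 : (0 : ℝ) ≤ (m : ℝ) := by nlinarith
  have hdistm : ∀ m' : ℤ, |(m' : ℝ)| = (m : ℝ) → D ≤ dist (e 0) (e m') := by
    intro m' hab
    have h1 := hQIl 0 m'
    have h2 : |((0 : ℤ) : ℝ) - (m' : ℝ)| = (m : ℝ) := by
      rw [Int.cast_zero, zero_sub, abs_neg, hab]
    rw [h2] at h1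
    have h3 : D + c ≤ (m : ℝ) / c := by
      rw [le_div_iff₀ hc0]
      nlinarith
    linarith
  rcases le_or_gt k 0 with hk0 | hk0
  · refine ⟨e m, hdistm m (abs_of_nonneg hm0), fun σ h1 h2 => ?_⟩
    exact main_lemma C c hC hc e hQIl hQIu hcon x k hk0 hk m hm1 σ h1 h2
  · -- reflect the axis
    set e' : ℤ → Y := fun i => e (-i) with he'
    have hset : {z | ∃ i : ℤ, z = e' i} = {z | ∃ i : ℤ, z = e i} := by
      ext z
      constructor
      · rintro ⟨i, rfl⟩; exact ⟨-i, rfl⟩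
      · rintro ⟨i, rfl⟩; exact ⟨-i, by simp only [he', neg_neg]⟩
    have hcast : ∀ a b : ℤ, |((-a : ℤ) : ℝ) - ((-b : ℤ) : ℝ)| = |(a : ℝ) - b| := by
      intro a b
      push_cast
      rw [show -(a : ℝ) - -(b : ℝ) = -((a : ℝ) - b) by ring, abs_neg]
    have hQIl' : ∀ a b : ℤ, |(a : ℝ) - b| / c - c ≤ dist (e' a) (e' b) := by
      intro a b
      have := hQIl (-a) (-b)
      rwa [hcast a b] at this
    have hQIu' : ∀ a b : ℤ, dist (e' a) (e' b) ≤ c * |(a : ℝ) - b| + c := by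
      intro a b
      have := hQIu (-a) (-b)
      rwa [hcast a b] at this
    have hcon' : IsContractingWith C {z | ∃ i : ℤ, z = e' i} := by rw [hset]; exact hcon
    have hk' : dist x (e' (-k)) = Metric.infDist x {z | ∃ i : ℤ, z = e' i} := by
      rw [hset]
      have : e' (-k) = e k := by simp only [he', neg_neg]
      rw [this]
      exact hk
    have habs : |((-m : ℤ) : ℝ)| = (m : ℝ) := by
      push_cast
      rw [abs_neg, abs_of_nonneg hm0]
    refine ⟨e (-m), hdistm (-m) habs, fun σ h1 h2 => ?_⟩
    have h2' : σ.f σ.len = e' m := by rw [he']; exact h2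
    have := main_lemma C c hC hc e' hQIl' hQIu' hcon' x (-k) (by omega) hk' m hm1 σ h1 h2'
    have he'0 : e' 0 = e 0 := by simp only [he', neg_zero]
    rwa [he'0] at this

end Wrapper

/-- uniformly finite dead-end depth. -/
theorem dead_end_depth_uniformly_finite
    {Y G : Type*} [MetricSpace Y] [ProperSpace Y] [Group G] [MulAction G Y]
    (hgeo : GeodesicSpace Y)
    (hiso : ∀ g : G, Isometry (fun y : Y => g • y))
    (o : Y)
    (hproper : ∀ r : ℝ, {g : G | dist o (g • o) ≤ r}.Finite)
    (hne : NonElementary G)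
    (hcontr : ∃ g : G, IsContractingElement o g) :
    ∃ R : ℝ, 0 < R ∧ ∀ g : G, ∃ γ : ℝ → Y,
      γ 0 = o ∧
      (∀ s ∈ Set.Ici (0 : ℝ), ∀ t ∈ Set.Ici (0 : ℝ), dist (γ s) (γ t) = |s - t|) ∧
      Metric.infDist (g • o) (γ '' Set.Ici (0 : ℝ)) ≤ R := by
  obtain ⟨h, hford, ⟨C, hC1, hcon⟩, c, hc1, hQI⟩ := hcontr
  have hc0 : (0 : ℝ) < c := by linarith
  have hC0 : (0 : ℝ) < C := by linarith
  have hQIl : ∀ m n : ℤ, |(m : ℝ) - n| / c - c ≤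
      dist ((fun i : ℤ => h ^ i • o) m) ((fun i : ℤ => h ^ i • o) n) := fun m n => (hQI m n).1
  have hQIu : ∀ m n : ℤ, dist ((fun i : ℤ => h ^ i • o) m) ((fun i : ℤ => h ^ i • o) n) ≤
      c * |(m : ℝ) - n| + c := fun m n => (hQI m n).2
  have hconA : IsContractingWith C {z | ∃ i : ℤ, z = (fun j : ℤ => h ^ j • o) i} := hcon
  set K := c * (c * (3 * C + c) + c * (8 * C + 1 + c)) + c + 4 * C with hK
  have hKpos : 0 < K := by
    have h2 : (0:ℝ) ≤ 3 * C + c := by linarith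
    have h3 : (0:ℝ) ≤ 8 * C + 1 + c := by linarith
    have h4 : (0:ℝ) ≤ c * (3 * C + c) + c * (8 * C + 1 + c) :=
      add_nonneg (mul_nonneg hc0.le h2) (mul_nonneg hc0.le h3)
    have h5 : (0:ℝ) ≤ c * (c * (3 * C + c) + c * (8 * C + 1 + c)) := mul_nonneg hc0.le h4
    simp only [hK]
    linarith
  refine ⟨K + 1, by linarith, fun g => ?_⟩
  set x : Y := g⁻¹ • o with hx
  -- a family of longer and longer geodesics from o passing K-close to g • o
  have hfam : ∀ i : ℕ, ∃ γ : GeodesicSegment Y, γ.f 0 = o ∧ (i : ℝ) - dist o x ≤ γ.len ∧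
      Metric.infDist (g • o) γ.image ≤ K := by
    intro i
    obtain ⟨z, hz1, hz2⟩ := exists_far_target C c hC1 hc1 (fun j : ℤ => h ^ j • o)
      hQIl hQIu hconA x (i : ℝ) (Nat.cast_nonneg i)
    obtain ⟨σ, hσs, hσt⟩ := hgeo x z
    have hσs' : σ.f 0 = x := hσs
    have hσt' : σ.f σ.len = z := hσt
    have hbound := hz2 σ hσs' hσt'
    have hbound' : Metric.infDist o σ.image ≤ K := by simpa using hbound
    have hσne : σ.image.Nonempty := ⟨σ.f 0, 0, ⟨le_refl 0, σ.len_nonneg⟩, rfl⟩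
    refine ⟨gsMap σ (fun y => g • y) (hiso g), ?_, ?_, ?_⟩
    · show g • σ.f 0 = o
      rw [hσs', hx, smul_inv_smul]
    · show (i : ℝ) - dist o x ≤ σ.len
      have hlen : dist x z = σ.len := by
        rw [← hσs', ← hσt', σ.isom 0 ⟨le_refl 0, σ.len_nonneg⟩ σ.len
          ⟨σ.len_nonneg, le_refl σ.len⟩, zero_sub, abs_neg, abs_of_nonneg σ.len_nonneg]
      have hz1' : (i : ℝ) ≤ dist o z := by simpa using hz1
      have htri : dist o z ≤ dist o x + dist x z := dist_triangle _ _ _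
      linarith
    · rw [gsMap_image]
      have : (fun y => g • y) o = g • o := rfl
      rw [← this]
      exact infDist_image_le (hiso g) o hσne hbound'
  choose γs hγ0 hγlen hγnear using hfam
  -- witness parameters
  have hwit : ∀ i : ℕ, ∃ t : ℝ, t ∈ Icc (0 : ℝ) (γs i).len ∧
      dist (g • o) ((γs i).f t) < K + 1 := by
    intro i
    have h1 : Metric.infDist (g • o) ((γs i).image) < K + 1 :=
      lt_of_le_of_lt (hγnear i) (by linarith)
    have hne' : (γs i).image.Nonempty := ⟨(γs i).f 0, 0, ⟨le_refl 0, (γs i).len_nonneg⟩, rfl⟩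
    obtain ⟨w, hw, hwd⟩ := (Metric.infDist_lt_iff hne').1 h1
    obtain ⟨t, ht, rfl⟩ := hw
    exact ⟨t, ht, hwd⟩
  choose ts hts htsd using hwit
  set T : ℝ := dist o (g • o) + (K + 1) with hT
  have htsT : ∀ i, ts i ≤ T := by
    intro i
    have h1 : dist o ((γs i).f (ts i)) = ts i := by
      rw [← hγ0 i, (γs i).isom 0 ⟨le_refl 0, (γs i).len_nonneg⟩ (ts i) (hts i),
        zero_sub, abs_neg, abs_of_nonneg (hts i).1]
    have h2 : dist o ((γs i).f (ts i)) ≤ dist o (g • o) + dist (g • o) ((γs i).f (ts i)) :=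
      dist_triangle _ _ _
    rw [h1] at h2
    linarith [htsd i]
  -- extended 1-Lipschitz maps
  set F : ℕ → ℝ → Y := fun i t => (γs i).f (max 0 (min t (γs i).len)) with hF
  have hclampmem : ∀ (i : ℕ) (t : ℝ), max 0 (min t (γs i).len) ∈ Icc (0 : ℝ) (γs i).len :=
    fun i t => ⟨le_max_left _ _, max_le (γs i).len_nonneg (min_le_right _ _)⟩
  have hFlip : ∀ (i : ℕ) (s t : ℝ), dist (F i s) (F i t) ≤ |s - t| := by
    intro i s t
    simp only [hF]
    rw [(γs i).isom _ (hclampmem i s) _ (hclampmem i t)]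
    calc |max 0 (min s (γs i).len) - max 0 (min t (γs i).len)| ≤
        |min s (γs i).len - min t (γs i).len| := abs_max_sub_max_le 0 _ _
      _ ≤ |s - t| := abs_min_sub_min_le s t (γs i).len
  have hF0 : ∀ i, F i 0 = o := by
    intro i
    simp only [hF]
    rw [min_eq_left (γs i).len_nonneg, max_self]
    exact hγ0 i
  have hFt : ∀ i, F i (ts i) = (γs i).f (ts i) := by
    intro i
    simp only [hF]
    rw [min_eq_left (hts i).2, max_eq_right (hts i).1]
  have hFclamp : ∀ (i : ℕ) (s : ℝ), 0 ≤ s → s ≤ (γs i).len → F i s = (γs i).f s := by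
    intro i s h1 h2
    simp only [hF]
    rw [min_eq_left h2, max_eq_right h1]
  -- the compact space of candidate limits
  set S : Set (ℝ → Y) := {u | (∀ s t : ℝ, dist (u s) (u t) ≤ |s - t|) ∧ u 0 = o} with hS
  have hScpt : IsCompact S := by
    have hP : IsCompact (Set.pi Set.univ (fun t : ℝ => Metric.closedBall o |t|)) :=
      isCompact_univ_pi (fun t => isCompact_closedBall o |t|)
    refine hP.of_isClosed_subset ?_ ?_
    · have h1 : IsClosed {u : ℝ → Y | ∀ s t : ℝ, dist (u s) (u t) ≤ |s - t|} := by
        have h2 : {u : ℝ → Y | ∀ s t : ℝ, dist (u s) (u t) ≤ |s - t|} =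
            ⋂ s : ℝ, ⋂ t : ℝ, {u : ℝ → Y | dist (u s) (u t) ≤ |s - t|} := by
          ext u; simp [Set.mem_iInter]
        rw [h2]
        exact isClosed_iInter fun s => isClosed_iInter fun t =>
          isClosed_le (Continuous.dist (continuous_apply s) (continuous_apply t))
            continuous_const
      have h2 : IsClosed {u : ℝ → Y | u 0 = o} :=
        isClosed_eq (continuous_apply 0) continuous_const
      have h3 : S = {u : ℝ → Y | ∀ s t : ℝ, dist (u s) (u t) ≤ |s - t|} ∩
          {u : ℝ → Y | u 0 = o} := by
        ext u; simp [hS, Set.mem_inter_iff]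
      rw [h3]
      exact h1.inter h2
    · intro u hu
      rw [Set.mem_univ_pi]
      intro t
      rw [Metric.mem_closedBall]
      calc dist (u t) o = dist (u t) (u 0) := by rw [hu.2]
        _ ≤ |t - 0| := hu.1 t 0
        _ = |t| := by rw [sub_zero]
  have hprod : IsCompact (S ×ˢ Icc (0 : ℝ) T) := hScpt.prod isCompact_Icc
  set q : ℕ → (ℝ → Y) × ℝ := fun i => (F i, ts i) with hq
  have hqmem : ∀ i, q i ∈ S ×ˢ Icc (0 : ℝ) T :=
    fun i => ⟨⟨hFlip i, hF0 i⟩, ⟨(hts i).1, htsT i⟩⟩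
  have hle : Filter.map q Filter.atTop ≤ 𝓟 (S ×ˢ Icc (0 : ℝ) T) := by
    rw [Filter.le_principal_iff, Filter.mem_map]
    exact Filter.Eventually.of_forall hqmem
  obtain ⟨w, hwm, hcl⟩ := hprod.exists_clusterPt hle
  obtain ⟨f, t₁⟩ := w
  obtain ⟨hfS, ht₁⟩ := hwm
  -- f is a geodesic ray
  have hfgeo : ∀ s ∈ Set.Ici (0 : ℝ), ∀ t ∈ Set.Ici (0 : ℝ), dist (f s) (f t) = |s - t| := by
    intro s hs t ht
    refine le_antisymm (hfS.1 s t) ?_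
    have hEc : IsClosed {w : (ℝ → Y) × ℝ | |s - t| ≤ dist (w.1 s) (w.1 t)} :=
      isClosed_le continuous_const
        (Continuous.dist ((continuous_apply s).comp continuous_fst)
          ((continuous_apply t).comp continuous_fst))
    have hEm : {w : (ℝ → Y) × ℝ | |s - t| ≤ dist (w.1 s) (w.1 t)} ∈
        Filter.map q Filter.atTop := by
      rw [Filter.mem_map]
      filter_upwards [Filter.eventually_ge_atTop ⌈max s t + dist o x⌉₊] with i hi
      have h1 : (⌈max s t + dist o x⌉₊ : ℝ) ≤ (i : ℝ) := Nat.cast_le.2 hi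
      have h2 := Nat.le_ceil (max s t + dist o x)
      have hLi : max s t ≤ (γs i).len := by linarith [hγlen i]
      have hsi : F i s = (γs i).f s :=
        hFclamp i s hs (le_trans (le_max_left s t) hLi)
      have hti : F i t = (γs i).f t :=
        hFclamp i t ht (le_trans (le_max_right s t) hLi)
      show |s - t| ≤ dist (F i s) (F i t)
      rw [hsi, hti, (γs i).isom s ⟨hs, le_trans (le_max_left s t) hLi⟩
        t ⟨ht, le_trans (le_max_right s t) hLi⟩]
    exact clusterPt_mem_of_isClosed hcl hEm hEc
  -- f t₁ is close to g • o
  have hfnear : dist (g • o) (f t₁) ≤ K + 1 := by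
    by_contra hgt
    push_neg at hgt
    set d := dist (g • o) (f t₁) with hd
    set δ := (d - (K + 1)) / 3 with hδ
    have hδ0 : 0 < δ := by simp only [hδ]; linarith
    have hUo : IsOpen {w : (ℝ → Y) × ℝ | dist (w.1 t₁) (f t₁) < δ ∧ |w.2 - t₁| < δ} := by
      have h1 : IsOpen {w : (ℝ → Y) × ℝ | dist (w.1 t₁) (f t₁) < δ} :=
        isOpen_lt (Continuous.dist ((continuous_apply t₁).comp continuous_fst)
          continuous_const) continuous_const
      have h2 : IsOpen {w : (ℝ → Y) × ℝ | |w.2 - t₁| < δ} :=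
        isOpen_lt ((continuous_snd.sub continuous_const).abs) continuous_const
      have h3 : {w : (ℝ → Y) × ℝ | dist (w.1 t₁) (f t₁) < δ ∧ |w.2 - t₁| < δ} =
          {w : (ℝ → Y) × ℝ | dist (w.1 t₁) (f t₁) < δ} ∩
          {w : (ℝ → Y) × ℝ | |w.2 - t₁| < δ} := rfl
      rw [h3]
      exact h1.inter h2
    have hUm : {w : (ℝ → Y) × ℝ | dist (w.1 t₁) (f t₁) < δ ∧ |w.2 - t₁| < δ} ∈
        nhds ((f, t₁) : (ℝ → Y) × ℝ) :=
      hUo.mem_nhds ⟨by simpa using hδ0, by simpa using hδ0⟩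
    have hrange : Set.range q ∈ Filter.map q Filter.atTop := by
      rw [Filter.mem_map]
      exact Filter.Eventually.of_forall fun i => Set.mem_range_self i
    have hnon := hcl.neBot.nonempty_of_mem
      (Filter.inter_mem (Filter.mem_inf_of_left hUm) (Filter.mem_inf_of_right hrange))
    obtain ⟨w, hwU, hwr⟩ := hnon
    obtain ⟨i, rfl⟩ := hwr
    have e2 : dist (g • o) (F i (ts i)) < K + 1 := by rw [hFt i]; exact htsd i
    have e3 : dist (F i (ts i)) (F i t₁) ≤ |ts i - t₁| := hFlip i (ts i) t₁
    have e4 : dist (g • o) (f t₁) ≤ dist (g • o) (F i t₁) + dist (F i t₁) (f t₁) :=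
      dist_triangle _ _ _
    have e5 : dist (g • o) (F i t₁) ≤ dist (g • o) (F i (ts i)) + dist (F i (ts i)) (F i t₁) :=
      dist_triangle _ _ _
    have hw1 : dist (F i t₁) (f t₁) < δ := hwU.1
    have hw2 : |ts i - t₁| < δ := hwU.2
    have : d < K + 1 + 2 * δ := by
      calc d = dist (g • o) (f t₁) := hd
        _ ≤ dist (g • o) (F i t₁) + dist (F i t₁) (f t₁) := e4
        _ ≤ dist (g • o) (F i (ts i)) + dist (F i (ts i)) (F i t₁) + dist (F i t₁) (f t₁) := by
            linarith
        _ < K + 1 + 2 * δ := by linarith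
    simp only [hδ] at this
    linarith
  refine ⟨f, hfS.2, hfgeo, ?_⟩
  calc Metric.infDist (g • o) (f '' Set.Ici (0 : ℝ)) ≤ dist (g • o) (f t₁) :=
      Metric.infDist_le_dist_of_mem ⟨t₁, ht₁.1, rfl⟩
    _ ≤ K + 1 := hfnear
end

section
/- Let a group G act properly by isometries on a proper geodesic metric space (Y,d) with basepoint o, and let h ∈ G be a contracting element. Then: (1) the cyclic subgroup ⟨h⟩ has finite index in E(h); and (2) E(h) = {g ∈ G : there exists an integer n > 0 with g h^n g^{-1} = h^n or g h^n g^{-1} = h^{-n}}. -/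
open Metric Set Filter

section EAux

variable {Y G : Type*} [MetricSpace Y] [Group G] [MulAction G Y]

private lemma EA_abs_min_sub_min (a b c : ℝ) : |min a c - min b c| ≤ |a - b| := by
  rcases le_total a c with h1 | h1 <;> rcases le_total b c with h2 | h2
  · rw [min_eq_left h1, min_eq_left h2]
  · rw [min_eq_left h1, min_eq_right h2, abs_of_nonpos (by linarith), abs_of_nonpos (by linarith)]
    linarith
  · rw [min_eq_right h1, min_eq_left h2, abs_of_nonneg (by linarith), abs_of_nonneg (by linarith)]
    linarith
  · rw [min_eq_right h1, min_eq_right h2, sub_self, abs_zero]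
    exact abs_nonneg _

private lemma EA_abs_max_sub_max (a b c : ℝ) : |max a c - max b c| ≤ |a - b| := by
  rcases le_total a c with h1 | h1 <;> rcases le_total b c with h2 | h2
  · rw [max_eq_right h1, max_eq_right h2, sub_self, abs_zero]
    exact abs_nonneg _
  · rw [max_eq_right h1, max_eq_left h2, abs_of_nonpos (by linarith), abs_of_nonpos (by linarith)]
    linarith
  · rw [max_eq_left h1, max_eq_right h2, abs_of_nonneg (by linarith), abs_of_nonneg (by linarith)]
    linarith
  · rw [max_eq_left h1, max_eq_left h2]

private lemma EA_conj_zpow {a x y : G} (hxy : a * x * a⁻¹ = y) (j : ℤ) :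
    a * x ^ j * a⁻¹ = y ^ j := by rw [← hxy, conj_zpow]

private lemma EA_conj_iter {h a : G} {s t : ℤ} (hrel : a * h ^ s * a⁻¹ = h ^ t) :
    ∀ m : ℕ, a ^ m * h ^ (s ^ m) * (a ^ m)⁻¹ = h ^ (t ^ m) := by
  intro m
  induction m with
  | zero => simp
  | succ m ih =>
    have e2 : a ^ m * h ^ (s ^ m * s) * (a ^ m)⁻¹ = h ^ (t ^ m * s) := by
      have e := EA_conj_zpow ih s
      rwa [← zpow_mul, ← zpow_mul] at e
    have e4 : a * h ^ (t ^ m * s) * a⁻¹ = h ^ (t ^ m * t) := by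
      have e := EA_conj_zpow hrel (t ^ m)
      rwa [← zpow_mul, ← zpow_mul, mul_comm s (t ^ m), mul_comm t (t ^ m)] at e
    calc a ^ (m+1) * h ^ (s ^ (m+1)) * (a ^ (m+1))⁻¹
        = a * (a ^ m * h ^ (s ^ m * s) * (a ^ m)⁻¹) * a⁻¹ := by
          rw [pow_succ s m, pow_succ' a m]; group
      _ = a * h ^ (t ^ m * s) * a⁻¹ := by rw [e2]
      _ = h ^ (t ^ (m+1)) := by rw [e4, pow_succ t m]

private lemma EA_dist_smul (hiso : ∀ g : G, Isometry (fun y : Y => g • y))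
    (g : G) (x y : Y) : dist (g • x) (g • y) = dist x y := (hiso g).dist_eq x y

private lemma EA_mem_orbit (o : Y) (h : G) (n : ℤ) : (h ^ n : G) • o ∈ cyclicOrbit o h := ⟨n, rfl⟩

private lemma EA_o_mem_orbit (o : Y) (h : G) : o ∈ cyclicOrbit o h := ⟨0, by simp⟩

private lemma EA_orbit_ne (o : Y) (h : G) : (cyclicOrbit o h).Nonempty := ⟨o, EA_o_mem_orbit o h⟩

private lemma EA_zpow_smul_mem (o : Y) (h : G) (k : ℤ) {x : Y} (hx : x ∈ cyclicOrbit o h) :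
    (h ^ k : G) • x ∈ cyclicOrbit o h := by
  obtain ⟨n, rfl⟩ := hx
  exact ⟨k + n, by rw [smul_smul, ← zpow_add]⟩

private lemma EA_smul_orbit (o : Y) (h : G) (k : ℤ) :
    (fun y => (h ^ k : G) • y) '' cyclicOrbit o h = cyclicOrbit o h := by
  ext y
  constructor
  · rintro ⟨x, hx, rfl⟩
    exact EA_zpow_smul_mem o h k hx
  · rintro ⟨n, rfl⟩
    refine ⟨(h ^ (n - k) : G) • o, ⟨n - k, rfl⟩, ?_⟩
    show (h ^ k : G) • ((h ^ (n - k) : G) • o) = h ^ n • o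
    rw [smul_smul, ← zpow_add, show k + (n - k) = n from by omega]

private lemma EA_infDist_smul (hiso : ∀ g : G, Isometry (fun y : Y => g • y))
    (g : G) (X : Set Y) (a : Y) :
    Metric.infDist a ((fun y => g • y) '' X) = Metric.infDist (g⁻¹ • a) X := by
  have e := Metric.infDist_image (Φ := fun y : Y => g • y) (hiso g) (x := g⁻¹ • a) (t := X)
  simpa using e

private lemma EA_infDist_zpow (hiso : ∀ g : G, Isometry (fun y : Y => g • y))
    (o : Y) (h : G) (k : ℤ) (y : Y) :
    Metric.infDist ((h ^ k : G) • y) (cyclicOrbit o h) = Metric.infDist y (cyclicOrbit o h) := by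
  conv_lhs => rw [← EA_smul_orbit o h k]
  exact Metric.infDist_image (hiso (h ^ k))

private lemma EA_proj_zpow (hiso : ∀ g : G, Isometry (fun y : Y => g • y))
    (o : Y) (h : G) (k : ℤ) {x y : Y} (hx : x ∈ proj (cyclicOrbit o h) y) :
    (h ^ k : G) • x ∈ proj (cyclicOrbit o h) ((h ^ k : G) • y) := by
  obtain ⟨hxX, hd⟩ := hx
  refine ⟨EA_zpow_smul_mem o h k hxX, ?_⟩
  rw [EA_dist_smul hiso (h ^ k) y x, hd, EA_infDist_zpow hiso o h k y]

private lemma EA_isClosed_orbit (o : Y)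
    (hproper : ∀ r : ℝ, {g : G | dist o (g • o) ≤ r}.Finite) (S : Set G) :
    IsClosed ((fun k : G => k • o) '' S) := by
  refine isClosed_of_closure_subset fun z hz => ?_
  have hWfin : {k ∈ S | dist o (k • o) ≤ 1 + dist o z}.Finite :=
    (hproper (1 + dist o z)).subset fun k hk => hk.2
  have hzB : z ∈ closure ((fun k : G => k • o) '' {k ∈ S | dist o (k • o) ≤ 1 + dist o z}) := by
    rw [Metric.mem_closure_iff] at hz ⊢
    intro ε hε
    obtain ⟨b, ⟨k, hkS, rfl⟩, hbd⟩ := hz (min ε 1) (lt_min hε one_pos)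
    refine ⟨k • o, ⟨k, ⟨hkS, ?_⟩, rfl⟩, lt_of_lt_of_le hbd (min_le_left _ _)⟩
    have h1 : dist z (k • o) ≤ 1 := hbd.le.trans (min_le_right ε 1)
    calc dist o (k • o) ≤ dist o z + dist z (k • o) := dist_triangle _ _ _
      _ ≤ 1 + dist o z := by linarith
  rw [((hWfin.image _).isClosed).closure_eq] at hzB
  exact Set.image_mono (fun k hk => hk.1) hzB

private lemma EA_orbit_eq (o : Y) (h : G) :
    cyclicOrbit o h = (fun k : G => k • o) '' Set.range (fun n : ℤ => h ^ n) := by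
  ext y
  constructor
  · rintro ⟨n, rfl⟩
    exact ⟨h ^ n, ⟨n, rfl⟩, rfl⟩
  · rintro ⟨k, ⟨n, rfl⟩, rfl⟩
    exact ⟨n, rfl⟩

private lemma EA_smulOrbit_eq (o : Y) (h g : G) :
    (fun y => g • y) '' cyclicOrbit o h
      = (fun k : G => k • o) '' Set.range (fun n : ℤ => g * h ^ n) := by
  ext y
  constructor
  · rintro ⟨x, ⟨n, rfl⟩, rfl⟩
    exact ⟨g * h ^ n, ⟨n, rfl⟩, mul_smul g (h ^ n) o⟩
  · rintro ⟨k, ⟨n, rfl⟩, rfl⟩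
    exact ⟨(h ^ n : G) • o, ⟨n, rfl⟩, (mul_smul g (h ^ n) o).symm⟩

private lemma EA_isBounded_projSet (Z : Set Y) {x₀ : Y} (hx₀ : x₀ ∈ Z) (γ : GeodesicSegment Y) :
    Bornology.IsBounded (projSet Z γ.image) := by
  refine (Metric.isBounded_closedBall
    (x := γ.source) (r := 2 * γ.len + dist γ.source x₀)).subset ?_
  rintro x hx
  rw [projSet, Set.mem_iUnion₂] at hx
  obtain ⟨a, ha, hxa⟩ := hx
  obtain ⟨s, hs, rfl⟩ := ha
  have h1 : dist (γ.f s) x = Metric.infDist (γ.f s) Z := hxa.2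
  have h2 : Metric.infDist (γ.f s) Z ≤ dist (γ.f s) x₀ := Metric.infDist_le_dist_of_mem hx₀
  have h3 : dist γ.source (γ.f s) = |0 - s| := γ.isom 0 ⟨le_refl 0, γ.len_nonneg⟩ s hs
  have h4 : |0 - s| = s := by rw [zero_sub, abs_neg, abs_of_nonneg hs.1]
  have h5 : dist (γ.f s) x₀ ≤ dist (γ.f s) γ.source + dist γ.source x₀ := dist_triangle _ _ _
  rw [Metric.mem_closedBall]
  have h6 : dist x γ.source ≤ dist x (γ.f s) + dist (γ.f s) γ.source := dist_triangle _ _ _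
  rw [dist_comm x (γ.f s), h1] at h6
  rw [dist_comm (γ.f s) γ.source] at h5 h6
  have h7 : s ≤ γ.len := hs.2
  rw [h3, h4] at h5 h6
  linarith

private lemma EA_proj_smul (hiso : ∀ g : G, Isometry (fun y : Y => g • y))
    (g : G) (X : Set Y) (a : Y) :
    proj ((fun y => g • y) '' X) a = (fun y => g • y) '' proj X (g⁻¹ • a) := by
  have hdist : ∀ x' : Y, dist a (g • x') = dist (g⁻¹ • a) x' := by
    intro x'
    rw [← EA_dist_smul hiso g (g⁻¹ • a) x', smul_inv_smul]
  ext x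
  constructor
  · rintro ⟨⟨x', hx', rfl⟩, hd⟩
    refine ⟨x', ⟨hx', ?_⟩, rfl⟩
    rw [← hdist x', ← EA_infDist_smul hiso g X a]
    exact hd
  · rintro ⟨x', ⟨hx', hd⟩, rfl⟩
    refine ⟨⟨x', hx', rfl⟩, ?_⟩
    rw [hdist x', EA_infDist_smul hiso g X a]
    exact hd

private lemma EA_contracting_smul (hiso : ∀ g : G, Isometry (fun y : Y => g • y))
    {C : ℝ} {X : Set Y} (hC : IsContractingWith C X) (g : G) :
    IsContractingWith C ((fun y => g • y) '' X) := by
  intro γ hγ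
  set γ' : GeodesicSegment Y :=
    ⟨γ.len, γ.len_nonneg, fun s => g⁻¹ • γ.f s, fun s hs t ht => by
      rw [EA_dist_smul hiso]; exact γ.isom s hs t ht⟩ with hγ'def
  have himg : γ'.image = (fun y => g⁻¹ • y) '' γ.image := by
    simp only [GeodesicSegment.image, hγ'def, Set.image_image]
  have hγ'h : ∀ p ∈ γ'.image, C ≤ Metric.infDist p X := by
    intro p hp
    rw [himg] at hp
    obtain ⟨q, hq, rfl⟩ := hp
    have hq2 := hγ q hq
    rwa [EA_infDist_smul hiso g X q] at hq2
  have hdiam := hC γ' hγ'h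
  have hps : projSet ((fun y => g • y) '' X) γ.image
      = (fun y => g • y) '' projSet X γ'.image := by
    rw [projSet, projSet, himg]
    ext x
    simp only [Set.mem_iUnion, Set.mem_image, exists_prop]
    constructor
    · rintro ⟨a, ha, hx⟩
      rw [EA_proj_smul hiso g X a] at hx
      obtain ⟨x', hx', rfl⟩ := hx
      exact ⟨x', ⟨g⁻¹ • a, ⟨⟨a, ha, rfl⟩, hx'⟩⟩, rfl⟩
    · rintro ⟨x', ⟨b, ⟨⟨a, ha, rfl⟩, hx'⟩⟩, rfl⟩
      refine ⟨a, ha, ?_⟩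
      rw [EA_proj_smul hiso g X a]
      exact ⟨x', hx', rfl⟩
  rw [hps, Isometry.diam_image (hiso g)]
  exact hdiam

end EAux

section EAux2

open Metric

variable {Y G : Type*} [MetricSpace Y] [Group G] [MulAction G Y]

private lemma EA_quasiconvex [ProperSpace Y] {C : ℝ} (hC : 1 ≤ C) {Z : Set Y}
    (hZcl : IsClosed Z) (hZne : Z.Nonempty) (hZ : IsContractingWith C Z)
    (γ : GeodesicSegment Y) (hsrc : γ.source ∈ Z) (htgt : γ.target ∈ Z) :
    ∀ p ∈ γ.image, infDist p Z ≤ 4 * C := by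
  rintro p ⟨t, htI, rfl⟩
  by_cases hlow : infDist (γ.f t) Z ≤ C
  · linarith
  push_neg at hlow
  obtain ⟨h0t, htlen⟩ := htI
  set cl : ℝ → ℝ := fun s => min (max s 0) γ.len with hcldef
  have hclmem : ∀ s, cl s ∈ Set.Icc (0:ℝ) γ.len :=
    fun s => ⟨le_min (le_max_right s 0) γ.len_nonneg, min_le_right _ _⟩
  have hclid : ∀ s, 0 ≤ s → s ≤ γ.len → cl s = s := by
    intro s h1 h2
    simp only [hcldef]
    rw [max_eq_left h1, min_eq_left h2]
  set ψ : ℝ → ℝ := fun s => infDist (γ.f (cl s)) Z with hψdef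
  have hψeq : ∀ s, 0 ≤ s → s ≤ γ.len → ψ s = infDist (γ.f s) Z := by
    intro s h1 h2
    simp only [hψdef]
    rw [hclid s h1 h2]
  have hψlip : LipschitzWith 1 ψ := by
    apply LipschitzWith.of_dist_le_mul
    intro s s'
    have h1 : dist (γ.f (cl s)) (γ.f (cl s')) = |cl s - cl s'| :=
      γ.isom _ (hclmem s) _ (hclmem s')
    have h2 : dist (ψ s) (ψ s') ≤ dist (γ.f (cl s)) (γ.f (cl s')) := by
      have h3 := (Metric.lipschitz_infDist_pt Z).dist_le_mul (γ.f (cl s)) (γ.f (cl s'))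
      simpa using h3
    have h3 : |cl s - cl s'| ≤ |s - s'| := by
      simp only [hcldef]
      exact le_trans (EA_abs_min_sub_min _ _ _) (EA_abs_max_sub_max s s' 0)
    rw [NNReal.coe_one, one_mul]
    rw [h1] at h2
    simp only [Real.dist_eq] at h2 ⊢
    linarith
  have hψcont := hψlip.continuous
  have hψt : ψ t = infDist (γ.f t) Z := hψeq t h0t htlen
  set A : Set ℝ := Set.Icc 0 t ∩ ψ ⁻¹' Set.Iic C with hAdef
  have hAne : (0:ℝ) ∈ A := by
    refine ⟨⟨le_refl 0, h0t⟩, ?_⟩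
    show ψ 0 ≤ C
    rw [hψeq 0 (le_refl 0) γ.len_nonneg]
    have h4 : infDist (γ.f 0) Z = 0 := Metric.infDist_zero_of_mem hsrc
    rw [h4]; linarith
  have hAcl : IsClosed A := isClosed_Icc.inter (isClosed_Iic.preimage hψcont)
  have hAbdd : BddAbove A := ⟨t, fun s hs => hs.1.2⟩
  set t₁ := sSup A with ht₁def
  have ht₁A : t₁ ∈ A := hAcl.csSup_mem ⟨0, hAne⟩ hAbdd
  have ht₁ψ : ψ t₁ ≤ C := ht₁A.2
  have ht₁mem : t₁ ∈ Set.Icc (0:ℝ) t := ht₁A.1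
  have ht₁lt : t₁ < t := by
    rcases lt_or_eq_of_le ht₁mem.2 with hlt | heq
    · exact hlt
    · exfalso; rw [heq, hψt] at ht₁ψ; linarith
  set B : Set ℝ := Set.Icc t γ.len ∩ ψ ⁻¹' Set.Iic C with hBdef
  have hBne : γ.len ∈ B := by
    refine ⟨⟨htlen, le_refl _⟩, ?_⟩
    show ψ γ.len ≤ C
    rw [hψeq γ.len γ.len_nonneg (le_refl _)]
    have h4 : infDist (γ.f γ.len) Z = 0 := Metric.infDist_zero_of_mem htgt
    rw [h4]; linarith
  have hBcl : IsClosed B := isClosed_Icc.inter (isClosed_Iic.preimage hψcont)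
  have hBbdd : BddBelow B := ⟨t, fun s hs => hs.1.1⟩
  set t₂ := sInf B with ht₂def
  have ht₂B : t₂ ∈ B := hBcl.csInf_mem ⟨_, hBne⟩ hBbdd
  have ht₂ψ : ψ t₂ ≤ C := ht₂B.2
  have ht₂mem : t₂ ∈ Set.Icc t γ.len := ht₂B.1
  have ht₂gt : t < t₂ := by
    rcases lt_or_eq_of_le ht₂mem.1 with hlt | heq
    · exact hlt
    · exfalso; rw [← heq, hψt] at ht₂ψ; linarith
  have h0t₁ : 0 ≤ t₁ := ht₁mem.1
  have ht₂len : t₂ ≤ γ.len := ht₂mem.2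
  have hmid : ∀ s, t₁ < s → s < t₂ → C < ψ s := by
    intro s hs1 hs2
    by_contra hcon
    push_neg at hcon
    rcases le_total s t with hst | hst
    · have hsA : s ∈ A := ⟨⟨le_trans h0t₁ hs1.le, hst⟩, hcon⟩
      exact absurd (le_csSup hAbdd hsA) (not_le.mpr hs1)
    · have hsB : s ∈ B := ⟨⟨hst, le_trans hs2.le ht₂len⟩, hcon⟩
      exact absurd (csInf_le hBbdd hsB) (not_le.mpr hs2)
  have hCt₁ : C ≤ ψ t₁ := by
    have hclset : IsClosed {s : ℝ | C ≤ ψ s} := isClosed_le continuous_const hψcont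
    have hsub : Set.Ioo t₁ t ⊆ {s : ℝ | C ≤ ψ s} :=
      fun s hs => (hmid s hs.1 (hs.2.trans ht₂gt)).le
    have hmem : t₁ ∈ closure (Set.Ioo t₁ t) := by
      rw [closure_Ioo (ne_of_lt ht₁lt)]
      exact ⟨le_refl _, ht₁lt.le⟩
    have h5 := closure_mono hsub hmem
    rwa [hclset.closure_eq] at h5
  have hCt₂ : C ≤ ψ t₂ := by
    have hclset : IsClosed {s : ℝ | C ≤ ψ s} := isClosed_le continuous_const hψcont
    have hsub : Set.Ioo t t₂ ⊆ {s : ℝ | C ≤ ψ s} :=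
      fun s hs => (hmid s (ht₁lt.trans hs.1) hs.2).le
    have hmem : t₂ ∈ closure (Set.Ioo t t₂) := by
      rw [closure_Ioo (ne_of_lt ht₂gt)]
      exact ⟨ht₂gt.le, le_refl _⟩
    have h5 := closure_mono hsub hmem
    rwa [hclset.closure_eq] at h5
  have hall : ∀ s, t₁ ≤ s → s ≤ t₂ → C ≤ ψ s := by
    intro s hs1 hs2
    rcases eq_or_lt_of_le hs1 with heq | h1
    · rw [← heq]; exact hCt₁
    rcases eq_or_lt_of_le hs2 with heq | h2
    · rw [heq]; exact hCt₂
    · exact (hmid s h1 h2).le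
  have ht₁₂ : t₁ ≤ t₂ := (ht₁lt.trans ht₂gt).le
  set δseg : GeodesicSegment Y :=
    ⟨t₂ - t₁, by linarith, fun s => γ.f (t₁ + s), fun s hs u hu => by
      have h1 : t₁ + s ∈ Set.Icc (0:ℝ) γ.len :=
        ⟨by linarith [hs.1], by linarith [hs.2]⟩
      have h2 : t₁ + u ∈ Set.Icc (0:ℝ) γ.len :=
        ⟨by linarith [hu.1], by linarith [hu.2]⟩
      rw [γ.isom _ h1 _ h2, add_sub_add_left_eq_sub]⟩ with hδdef
  have hlen : δseg.len = t₂ - t₁ := rfl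
  have hfδ : ∀ s : ℝ, δseg.f s = γ.f (t₁ + s) := fun s => rfl
  have hδim : ∀ p ∈ δseg.image, C ≤ infDist p Z := by
    rintro p ⟨s, hs, rfl⟩
    rw [hlen] at hs
    rw [hfδ s]
    have h1 : 0 ≤ t₁ + s := by linarith [hs.1]
    have h2 : t₁ + s ≤ γ.len := by linarith [hs.2]
    have h3 := hall (t₁ + s) (by linarith [hs.1]) (by linarith [hs.2])
    rwa [hψeq _ h1 h2] at h3
  have hdiam := hZ δseg hδim
  obtain ⟨z₁, hz₁Z, hz₁d⟩ := hZcl.exists_infDist_eq_dist hZne (γ.f t₁)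
  obtain ⟨z₂, hz₂Z, hz₂d⟩ := hZcl.exists_infDist_eq_dist hZne (γ.f t₂)
  have hm1 : γ.f t₁ ∈ δseg.image := by
    refine ⟨0, ?_, ?_⟩
    · rw [hlen]; exact ⟨le_refl 0, by linarith⟩
    · rw [hfδ 0, add_zero]
  have hm2 : γ.f t₂ ∈ δseg.image := by
    refine ⟨t₂ - t₁, ?_, ?_⟩
    · rw [hlen]; exact ⟨by linarith, le_refl _⟩
    · rw [hfδ (t₂ - t₁)]
      congr 1
      ring
  have hz₁m : z₁ ∈ projSet Z δseg.image := Set.mem_biUnion hm1 ⟨hz₁Z, hz₁d.symm⟩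
  have hz₂m : z₂ ∈ projSet Z δseg.image := Set.mem_biUnion hm2 ⟨hz₂Z, hz₂d.symm⟩
  obtain ⟨z₀, hz₀⟩ := hZne
  have hbdd := EA_isBounded_projSet Z hz₀ δseg
  have hzz : dist z₁ z₂ ≤ C := le_trans (Metric.dist_le_diam_of_mem hbdd hz₁m hz₂m) hdiam
  have ht₁len : t₁ ≤ γ.len := by linarith
  have h0t₂ : (0:ℝ) ≤ t₂ := by linarith
  have hψt₁ : infDist (γ.f t₁) Z ≤ C := by
    rw [← hψeq t₁ h0t₁ ht₁len]; exact ht₁ψ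
  have hψt₂ : infDist (γ.f t₂) Z ≤ C := by
    rw [← hψeq t₂ h0t₂ ht₂len]; exact ht₂ψ
  have hlen12 : dist (γ.f t₁) (γ.f t₂) = t₂ - t₁ := by
    rw [γ.isom t₁ ⟨h0t₁, ht₁len⟩ t₂ ⟨h0t₂, ht₂len⟩, abs_of_nonpos (by linarith), neg_sub]
  have htt : t₂ - t₁ ≤ 3 * C := by
    have h8 := dist_triangle4 (γ.f t₁) z₁ z₂ (γ.f t₂)
    rw [hlen12] at h8
    have e1 : dist (γ.f t₁) z₁ ≤ C := by rw [← hz₁d]; exact hψt₁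
    have e2 : dist z₂ (γ.f t₂) ≤ C := by rw [dist_comm, ← hz₂d]; exact hψt₂
    linarith
  calc infDist (γ.f t) Z ≤ infDist (γ.f t₁) Z + dist (γ.f t) (γ.f t₁) :=
        Metric.infDist_le_infDist_add_dist
    _ ≤ C + (t - t₁) := by
        have h9 : dist (γ.f t) (γ.f t₁) = t - t₁ := by
          rw [γ.isom t ⟨h0t, htlen⟩ t₁ ⟨h0t₁, ht₁len⟩, abs_of_nonneg (by linarith)]
        linarith
    _ ≤ 4 * C := by
        have h10 : t ≤ t₂ := ht₂gt.le
        linarith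

end EAux2

section EAux3

open Metric

variable {Y G : Type*} [MetricSpace Y] [Group G] [MulAction G Y]

private lemma EA_dist_pow (hiso : ∀ g : G, Isometry (fun y : Y => g • y))
    (o : Y) (a : G) : ∀ m : ℕ, dist o ((a ^ m : G) • o) ≤ (m : ℝ) * dist o (a • o) := by
  intro m
  induction m with
  | zero => simp
  | succ m ih =>
    have e1 : (a ^ (m+1) : G) • o = a • ((a ^ m : G) • o) := by
      rw [pow_succ' a m, mul_smul]
    have e2 : dist o ((a ^ (m+1) : G) • o)
        ≤ dist o (a • o) + dist o ((a ^ m : G) • o) := by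
      calc dist o ((a ^ (m+1) : G) • o)
          ≤ dist o (a • o) + dist (a • o) ((a ^ (m+1) : G) • o) := dist_triangle _ _ _
        _ = dist o (a • o) + dist o ((a ^ m : G) • o) := by
            rw [e1, EA_dist_smul hiso a o ((a ^ m : G) • o)]
    push_cast
    linarith

set_option maxHeartbeats 1000000 in
private lemma EA_conj_abs_le (hiso : ∀ g : G, Isometry (fun y : Y => g • y))
    (o : Y) {h : G} {c : ℝ} (hc1 : 1 ≤ c)
    (hqi : ∀ m n : ℤ, (|m - n| : ℝ) / c - c ≤ dist ((h ^ m : G) • o) ((h ^ n : G) • o) ∧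
      dist ((h ^ m : G) • o) ((h ^ n : G) • o) ≤ c * (|m - n| : ℝ) + c)
    (a : G) {s t : ℤ} (hs : 0 < s) (hrel : a * h ^ s * a⁻¹ = h ^ t) : |t| ≤ s := by
  by_contra hcon
  push_neg at hcon
  have hc0 : (0:ℝ) < c := lt_of_lt_of_le one_pos hc1
  set D := dist o (a • o) with hD
  have hD0 : 0 ≤ D := dist_nonneg
  have hinv : ∀ m : ℕ, dist o (((a ^ m)⁻¹ : G) • o) ≤ (m:ℝ) * D := by
    intro m
    have e : dist o (((a ^ m)⁻¹ : G) • o) = dist ((a ^ m : G) • o) o := by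
      rw [← EA_dist_smul hiso (a ^ m) o ((a ^ m)⁻¹ • o), smul_inv_smul]
    rw [e, dist_comm]
    exact EA_dist_pow hiso o a m
  have hupper : ∀ m : ℕ, dist o ((h ^ (t ^ m) : G) • o) ≤ 2 * (m:ℝ) * D + (c * (s:ℝ)^m + c) := by
    intro m
    have hiter := EA_conj_iter hrel m
    have e0 : (h ^ (t ^ m) : G) • o
        = (a ^ m : G) • ((h ^ (s ^ m) : G) • (((a ^ m)⁻¹ : G) • o)) := by
      rw [← hiter, mul_smul, mul_smul]
    have e1 : dist o ((h ^ (t ^ m) : G) • o)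
        ≤ dist o ((a ^ m : G) • o) + dist o ((h ^ (s ^ m) : G) • (((a ^ m)⁻¹ : G) • o)) := by
      rw [e0]
      calc dist o ((a ^ m : G) • ((h ^ (s ^ m) : G) • (((a ^ m)⁻¹ : G) • o)))
          ≤ dist o ((a ^ m : G) • o)
            + dist ((a ^ m : G) • o) ((a ^ m : G) • ((h ^ (s ^ m) : G) • (((a ^ m)⁻¹ : G) • o))) :=
            dist_triangle _ _ _
        _ = dist o ((a ^ m : G) • o) + dist o ((h ^ (s ^ m) : G) • (((a ^ m)⁻¹ : G) • o)) := by
            rw [EA_dist_smul hiso]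
    have e2 : dist o ((h ^ (s ^ m) : G) • (((a ^ m)⁻¹ : G) • o))
        ≤ dist o ((h ^ (s ^ m) : G) • o) + dist o (((a ^ m)⁻¹ : G) • o) := by
      calc dist o ((h ^ (s ^ m) : G) • (((a ^ m)⁻¹ : G) • o))
          ≤ dist o ((h ^ (s ^ m) : G) • o)
            + dist ((h ^ (s ^ m) : G) • o) ((h ^ (s ^ m) : G) • (((a ^ m)⁻¹ : G) • o)) :=
            dist_triangle _ _ _
        _ = dist o ((h ^ (s ^ m) : G) • o) + dist o (((a ^ m)⁻¹ : G) • o) := by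
            rw [EA_dist_smul hiso]
    have e3 : dist o ((h ^ (s ^ m) : G) • o) ≤ c * (s:ℝ)^m + c := by
      have hs0 : (0:ℝ) ≤ (s:ℝ) := by exact_mod_cast hs.le
      have e := (hqi (s ^ m) 0).2
      simp only [zpow_zero, one_smul] at e
      rw [dist_comm] at e
      have habs : |((s ^ m : ℤ) : ℝ) - ((0 : ℤ) : ℝ)| = (s:ℝ)^m := by
        push_cast
        rw [sub_zero, abs_of_nonneg (pow_nonneg hs0 m)]
      rwa [habs] at e
    have e4 := EA_dist_pow hiso o a m
    have e5 := hinv m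
    calc dist o ((h ^ (t ^ m) : G) • o)
        ≤ dist o ((a ^ m : G) • o) + (dist o ((h ^ (s^m) : G) • o) + dist o (((a^m)⁻¹ : G) • o)) := by
          linarith
      _ ≤ 2 * (m:ℝ) * D + (c * (s:ℝ)^m + c) := by linarith
  have hlower : ∀ m : ℕ, (|(t:ℝ)| ^ m) / c - c ≤ dist o ((h ^ (t ^ m) : G) • o) := by
    intro m
    have e := (hqi (t ^ m) 0).1
    simp only [zpow_zero, one_smul] at e
    rw [dist_comm] at e
    have habs : |((t ^ m : ℤ) : ℝ) - ((0 : ℤ) : ℝ)| = |(t:ℝ)| ^ m := by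
      push_cast
      rw [sub_zero, abs_pow]
    rwa [habs] at e
  have hσ1' : (1:ℝ) ≤ (s:ℝ) := by exact_mod_cast hs
  have hτσ' : (s:ℝ) + 1 ≤ |(t:ℝ)| := by
    have h0 : s + 1 ≤ |t| := hcon
    have h1 : ((s + 1 : ℤ) : ℝ) ≤ ((|t| : ℤ) : ℝ) := by exact_mod_cast h0
    push_cast at h1
    linarith
  set σ := ((s:ℤ) : ℝ) with hσ
  set τ := |(t:ℝ)| with hτ
  have hσ1 : 1 ≤ σ := hσ1'
  have hτσ : σ + 1 ≤ τ := hτσ'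
  have hσ0 : (0:ℝ) < σ := by linarith
  have hmaster : ∀ m : ℕ, τ ^ m ≤ 2*c*(m:ℝ)*D + c^2 * σ ^ m + 2*c^2 := by
    intro m
    have h1 := hlower m
    have h2 := hupper m
    have h3 : τ ^ m / c ≤ 2*(m:ℝ)*D + c*σ^m + 2*c := by linarith
    have h4 : τ ^ m ≤ (2*(m:ℝ)*D + c*σ^m + 2*c) * c := (div_le_iff₀ hc0).mp h3
    have h5 : (2*(m:ℝ)*D + c*σ^m + 2*c) * c = 2*c*(m:ℝ)*D + c^2*σ^m + 2*c^2 := by ring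
    linarith
  obtain ⟨k, hk⟩ := exists_nat_gt (σ^2 * (3*c^2 + 4*c*D) + σ*c + 1)
  have hσc : 1 ≤ σ * c := by nlinarith
  have hquad : 0 ≤ σ^2 * (3*c^2 + 4*c*D) := by positivity
  have hk1 : (1:ℝ) ≤ (k:ℝ) := by linarith
  have hkσc : σ * c ≤ (k:ℝ) := by linarith
  have hstep1 : (k:ℝ)/σ ≤ (1 + 1/σ)^k := by
    have h1σ : (0:ℝ) < 1/σ := by positivity
    have hb := one_add_mul_le_pow (a := 1/σ) (by linarith) k
    have he : (k:ℝ)/σ = (k:ℝ) * (1/σ) := by ring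
    rw [he]
    linarith
  have hσk : (0:ℝ) ≤ σ^k := by positivity
  have hstep2 : σ^k * ((k:ℝ)/σ) ≤ (σ + 1)^k := by
    have h6 := mul_le_mul_of_nonneg_left hstep1 hσk
    have he : σ^k * (1+1/σ)^k = (σ+1)^k := by
      rw [← mul_pow]
      congr 1
      field_simp
    linarith
  have hstep3 : (σ^k * ((k:ℝ)/σ))^2 ≤ ((σ+1)^k)^2 := by
    apply pow_le_pow_left₀ (by positivity) hstep2 2
  have hτ2k : ((σ+1)^k)^2 ≤ τ^(2*k) := by
    have e : ((σ+1)^k)^2 = (σ+1)^(2*k) := by rw [← pow_mul, mul_comm]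
    rw [e]
    exact pow_le_pow_left₀ (by positivity) hτσ (2*k)
  have hσne : σ ≠ 0 := ne_of_gt hσ0
  have hLHS : (σ^k * ((k:ℝ)/σ))^2 = σ^(2*k) * ((k:ℝ)^2/σ^2) := by
    rw [mul_pow, div_pow, show 2*k = k*2 from mul_comm 2 k, pow_mul]
  have hAineq : σ^(2*k) * ((k:ℝ)^2/σ^2) ≤ 4*c*(k:ℝ)*D + c^2 * σ^(2*k) + 2*c^2 := by
    have hm := hmaster (2*k)
    have hcast : ((2*k : ℕ) : ℝ) = 2*(k:ℝ) := by push_cast; ring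
    rw [hcast] at hm
    calc σ^(2*k) * ((k:ℝ)^2/σ^2) = (σ^k * ((k:ℝ)/σ))^2 := hLHS.symm
      _ ≤ ((σ+1)^k)^2 := hstep3
      _ ≤ τ^(2*k) := hτ2k
      _ ≤ 2*c*(2*(k:ℝ))*D + c^2 * σ^(2*k) + 2*c^2 := hm
      _ = 4*c*(k:ℝ)*D + c^2 * σ^(2*k) + 2*c^2 := by ring
  set A := σ^(2*k) with hA
  have hA1 : 1 ≤ A := by
    rw [hA]
    calc (1:ℝ) = 1^(2*k) := (one_pow _).symm
      _ ≤ σ^(2*k) := pow_le_pow_left₀ zero_le_one hσ1 (2*k)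
  have hσ2 : (0:ℝ) < σ^2 := by positivity
  have h7 : (σ*c)^2 ≤ (k:ℝ)^2 := pow_le_pow_left₀ (by positivity) hkσc 2
  have hc2k : c^2 ≤ (k:ℝ)^2/σ^2 := by
    rw [le_div_iff₀ hσ2]
    nlinarith
  have h8 : ((k:ℝ)^2/σ^2 - c^2) ≤ ((k:ℝ)^2/σ^2 - c^2) * A :=
    le_mul_of_one_le_right (by linarith) hA1
  have h9 : ((k:ℝ)^2/σ^2 - c^2) * A ≤ 4*c*(k:ℝ)*D + 2*c^2 := by
    have he : ((k:ℝ)^2/σ^2 - c^2) * A = A * ((k:ℝ)^2/σ^2) - c^2*A := by ring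
    rw [he]
    linarith
  have h10 : (k:ℝ)^2/σ^2 ≤ c^2 + 4*c*(k:ℝ)*D + 2*c^2 := by linarith
  have h11 : (k:ℝ)^2 ≤ (c^2 + 4*c*(k:ℝ)*D + 2*c^2) * σ^2 := (div_le_iff₀ hσ2).mp h10
  have h12 : c^2 + 4*c*(k:ℝ)*D + 2*c^2 ≤ (3*c^2 + 4*c*D)*(k:ℝ) := by
    nlinarith [mul_nonneg (mul_nonneg (by norm_num : (0:ℝ) ≤ 3) (sq_nonneg c)) (by linarith : (0:ℝ) ≤ (k:ℝ) - 1)]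
  have h13 : (c^2 + 4*c*(k:ℝ)*D + 2*c^2) * σ^2 ≤ σ^2 * (3*c^2 + 4*c*D) * (k:ℝ) := by
    have := mul_le_mul_of_nonneg_right h12 (sq_nonneg σ)
    calc (c^2 + 4*c*(k:ℝ)*D + 2*c^2) * σ^2 ≤ ((3*c^2 + 4*c*D)*(k:ℝ)) * σ^2 := this
      _ = σ^2 * (3*c^2 + 4*c*D) * (k:ℝ) := by ring
  have h14 : σ^2 * (3*c^2 + 4*c*D) ≤ (k:ℝ) - σ*c - 1 := by linarith
  have hkpos : (0:ℝ) < (k:ℝ) := by linarith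
  have h15 : (k:ℝ)^2 ≤ ((k:ℝ) - σ*c - 1) * (k:ℝ) := by
    calc (k:ℝ)^2 ≤ (c^2 + 4*c*(k:ℝ)*D + 2*c^2) * σ^2 := h11
      _ ≤ σ^2 * (3*c^2 + 4*c*D) * (k:ℝ) := h13
      _ ≤ ((k:ℝ) - σ*c - 1) * (k:ℝ) := mul_le_mul_of_nonneg_right h14 hkpos.le
  nlinarith [h15, hσc, hkpos]

end EAux3

section EAux4

open Metric

variable {Y G : Type*} [MetricSpace Y] [Group G] [MulAction G Y]

private lemma EA_Egroup_conj (hiso : ∀ g : G, Isometry (fun y : Y => g • y))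
    (o : Y) (h : G) {g : G} (hg : g ∈ Egroup o h) (a b : ℤ) :
    h ^ a * g * h ^ b ∈ Egroup o h := by
  obtain ⟨r, hr, h1, h2⟩ := hg
  refine ⟨r, hr, ?_, ?_⟩
  · rintro y ⟨x, hx, rfl⟩
    have e : (h ^ a * g * h ^ b) • x = (h ^ a : G) • (g • ((h ^ b : G) • x)) := by
      rw [mul_smul, mul_smul]
    show infDist ((h ^ a * g * h ^ b) • x) (cyclicOrbit o h) ≤ r
    rw [e, EA_infDist_zpow hiso o h a]
    exact h1 _ ⟨(h ^ b : G) • x, EA_zpow_smul_mem o h b hx, rfl⟩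
  · intro y hy
    have himg : (fun x => (h ^ a * g * h ^ b) • x) '' cyclicOrbit o h
        = (fun x => (h ^ a : G) • x) '' ((fun x => g • x) '' cyclicOrbit o h) := by
      rw [Set.image_image]
      conv_rhs => rw [← EA_smul_orbit o h b]
      rw [Set.image_image]
      exact Set.image_congr' (fun x => by rw [mul_smul, mul_smul])
    show infDist y ((fun x => (h ^ a * g * h ^ b) • x) '' cyclicOrbit o h) ≤ r
    rw [himg, EA_infDist_smul hiso (h ^ a) _ y]
    have hmem : (h ^ a : G)⁻¹ • y ∈ cyclicOrbit o h := by
      rw [← zpow_neg]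
      exact EA_zpow_smul_mem o h (-a) hy
    exact h2 _ hmem

private lemma EA_p2f_core (hiso : ∀ g : G, Isometry (fun y : Y => g • y))
    (o : Y) {h : G} (hord : ¬ IsOfFinOrder h) {c : ℝ} (hc1 : 1 ≤ c)
    (hqi : ∀ m n : ℤ, (|m - n| : ℝ) / c - c ≤ dist ((h ^ m : G) • o) ((h ^ n : G) • o) ∧
      dist ((h ^ m : G) • o) ((h ^ n : G) • o) ≤ c * (|m - n| : ℝ) + c)
    {g : G} {k q : ℤ} (hk : 0 < k) (hrel : g * h ^ k * g⁻¹ = h ^ q) :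
    ∃ n : ℤ, 0 < n ∧ (g * h ^ n * g⁻¹ = h ^ n ∨ g * h ^ n * g⁻¹ = h ^ (-n)) := by
  have hq0 : q ≠ 0 := by
    rintro rfl
    have h1 : (h : G) ^ k = 1 := by
      have e : (h : G) ^ k = g⁻¹ * (g * h ^ k * g⁻¹) * g := by group
      rw [e, hrel]
      simp
    apply hord
    apply isOfFinOrder_iff_pow_eq_one.mpr
    refine ⟨k.toNat, by omega, ?_⟩
    rw [← zpow_natCast, Int.toNat_of_nonneg hk.le]
    exact h1
  have habs1 : |q| ≤ k := EA_conj_abs_le hiso o hc1 hqi g hk hrel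
  have hq' : g⁻¹ * h ^ q * (g⁻¹)⁻¹ = h ^ k := by
    rw [inv_inv]
    calc g⁻¹ * h ^ q * g = g⁻¹ * (g * h ^ k * g⁻¹) * g := by rw [hrel]
      _ = h ^ k := by group
  have habs2 : k ≤ |q| := by
    rcases lt_or_gt_of_ne hq0 with hqneg | hqpos
    · have hq'' : g⁻¹ * h ^ (-q) * (g⁻¹)⁻¹ = h ^ (-k) := by
        have e : g⁻¹ * h ^ (-q) * (g⁻¹)⁻¹ = (g⁻¹ * h ^ q * (g⁻¹)⁻¹)⁻¹ := by group
        rw [e, hq', ← zpow_neg]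
      have h3 := EA_conj_abs_le hiso o hc1 hqi g⁻¹ (by omega : (0:ℤ) < -q) hq''
      rw [abs_neg, abs_of_nonneg hk.le] at h3
      rw [abs_of_nonpos hqneg.le]
      exact h3
    · have h3 := EA_conj_abs_le hiso o hc1 hqi g⁻¹ hqpos hq'
      rw [abs_of_nonneg hk.le] at h3
      rw [abs_of_pos hqpos]
      exact h3
  have habs : |q| = k := le_antisymm habs1 habs2
  rcases (abs_eq hk.le).mp habs with hqk | hqk
  · exact ⟨k, hk, Or.inl (hqk ▸ hrel)⟩
  · exact ⟨k, hk, Or.inr (hqk ▸ hrel)⟩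

private lemma EA_part2_forward (hiso : ∀ g : G, Isometry (fun y : Y => g • y))
    (o : Y) (hproper : ∀ r : ℝ, {g : G | dist o (g • o) ≤ r}.Finite)
    {h : G} (hord : ¬ IsOfFinOrder h) {c : ℝ} (hc1 : 1 ≤ c)
    (hqi : ∀ m n : ℤ, (|m - n| : ℝ) / c - c ≤ dist ((h ^ m : G) • o) ((h ^ n : G) • o) ∧
      dist ((h ^ m : G) • o) ((h ^ n : G) • o) ≤ c * (|m - n| : ℝ) + c)
    {g : G} (hg : g ∈ Egroup o h) :
    ∃ n : ℤ, 0 < n ∧ (g * h ^ n * g⁻¹ = h ^ n ∨ g * h ^ n * g⁻¹ = h ^ (-n)) := by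
  obtain ⟨r, hr, hcond1, hcond2⟩ := hg
  have hXne : (cyclicOrbit o h).Nonempty := EA_orbit_ne o h
  have hφ : ∀ m : ℕ, ∃ i : ℤ, dist (g • ((h ^ (m:ℤ) : G) • o)) ((h ^ i : G) • o) < r + 1 := by
    intro m
    have h1 : infDist (g • ((h ^ (m:ℤ) : G) • o)) (cyclicOrbit o h) ≤ r :=
      hcond1 _ ⟨(h ^ (m:ℤ) : G) • o, ⟨(m:ℤ), rfl⟩, rfl⟩
    have h2 : infDist (g • ((h ^ (m:ℤ) : G) • o)) (cyclicOrbit o h) < r + 1 := by linarith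
    obtain ⟨x, hxX, hxd⟩ := (Metric.infDist_lt_iff hXne).mp h2
    obtain ⟨i, rfl⟩ := hxX
    exact ⟨i, hxd⟩
  choose φ hφ using hφ
  set F : ℕ → G := fun m => h ^ (-(φ m)) * g * h ^ (m:ℤ) with hF
  have hFdist : ∀ m : ℕ, dist o (F m • o) ≤ r + 1 := by
    intro m
    have e1 : (h ^ (φ m) : G) • (F m • o) = g • ((h ^ (m:ℤ) : G) • o) := by
      rw [smul_smul]
      rw [show (h : G) ^ (φ m) * F m = g * h ^ (m:ℤ) from by rw [hF]; group]
      rw [mul_smul]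
    have e2 : dist o (F m • o) = dist ((h ^ (φ m) : G) • o) ((h ^ (φ m) : G) • (F m • o)) :=
      (EA_dist_smul hiso _ _ _).symm
    rw [e2, e1, dist_comm]
    exact (hφ m).le
  obtain ⟨m1, -, m2, -, hne, heq⟩ :=
    Set.infinite_univ.exists_ne_map_eq_of_mapsTo (f := F)
      (fun m _ => hFdist m) (hproper (r + 1))
  have hkey : ∀ a b : ℕ, F a = F b → g * h ^ ((a:ℤ) - b) * g⁻¹ = h ^ (φ a - φ b) := by
    intro a b hab
    have e : (h:G) ^ (φ a) * F a * (h ^ ((b:ℤ)))⁻¹ * g⁻¹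
        = h ^ (φ a) * F b * (h ^ ((b:ℤ)))⁻¹ * g⁻¹ := by rw [hab]
    rw [hF] at e
    simp only at e
    calc g * h ^ ((a:ℤ) - b) * g⁻¹
        = h ^ (φ a) * (h ^ (-(φ a)) * g * h ^ (a:ℤ)) * (h ^ ((b:ℤ)))⁻¹ * g⁻¹ := by group
      _ = h ^ (φ a) * (h ^ (-(φ b)) * g * h ^ (b:ℤ)) * (h ^ ((b:ℤ)))⁻¹ * g⁻¹ := e
      _ = h ^ (φ a - φ b) := by group
  rcases hne.lt_or_gt with hlt | hlt
  · exact EA_p2f_core hiso o hord hc1 hqi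
      (by omega : (0:ℤ) < (m2:ℤ) - m1) (hkey m2 m1 heq.symm)
  · exact EA_p2f_core hiso o hord hc1 hqi
      (by omega : (0:ℤ) < (m1:ℤ) - m2) (hkey m1 m2 heq)

end EAux4

section EAux5

open Metric

variable {Y G : Type*} [MetricSpace Y] [Group G] [MulAction G Y]

private lemma EA_part2_backward (hiso : ∀ g : G, Isometry (fun y : Y => g • y))
    (o : Y) {h : G} {c : ℝ} (hc1 : 1 ≤ c)
    (hqi : ∀ m n : ℤ, (|m - n| : ℝ) / c - c ≤ dist ((h ^ m : G) • o) ((h ^ n : G) • o) ∧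
      dist ((h ^ m : G) • o) ((h ^ n : G) • o) ≤ c * (|m - n| : ℝ) + c)
    {g : G} {n : ℤ} (hn : 0 < n)
    (hd : g * h ^ n * g⁻¹ = h ^ n ∨ g * h ^ n * g⁻¹ = h ^ (-n)) :
    g ∈ Egroup o h := by
  obtain ⟨ε, hε, hrel⟩ : ∃ ε : ℤ, (ε = 1 ∨ ε = -1) ∧ g * h ^ n * g⁻¹ = h ^ (ε * n) := by
    rcases hd with hd | hd
    · exact ⟨1, Or.inl rfl, by rw [one_mul]; exact hd⟩
    · exact ⟨-1, Or.inr rfl, by rw [neg_one_mul]; exact hd⟩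
  have hconv : ∀ i : ℤ, g * h ^ (n * i) * g⁻¹ = h ^ (ε * (n * i)) := by
    intro i
    have e := EA_conj_zpow hrel i
    rwa [← zpow_mul, ← zpow_mul, mul_assoc ε n i] at e
  have hmul : ∀ i : ℤ, g * h ^ (n * i) = h ^ (ε * (n * i)) * g := by
    intro i
    calc g * h ^ (n * i) = g * h ^ (n * i) * g⁻¹ * g := by group
      _ = h ^ (ε * (n * i)) * g := by rw [hconv i]
  have hn1 : (1:ℝ) ≤ (n:ℝ) := by exact_mod_cast hn
  have hc0 : (0:ℝ) ≤ c := by linarith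
  have hdistg : (0:ℝ) ≤ dist o (g • o) := dist_nonneg
  have hzs : ∀ s : ℤ, 0 ≤ s → s < n → dist ((h ^ s : G) • o) o ≤ c * (n:ℝ) + c := by
    intro s hs0 hslt
    have e := (hqi s 0).2
    simp only [zpow_zero, one_smul] at e
    have habs : |((s : ℤ) : ℝ) - ((0 : ℤ) : ℝ)| = (s:ℝ) := by
      push_cast
      rw [sub_zero, abs_of_nonneg (by exact_mod_cast hs0)]
    rw [habs] at e
    have hsn : (s:ℝ) ≤ (n:ℝ) := by exact_mod_cast hslt.le
    nlinarith
  refine ⟨c * (n:ℝ) + c + dist o (g • o) + 1, by nlinarith, ?_, ?_⟩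
  · rintro y ⟨x, ⟨m, rfl⟩, rfl⟩
    have hs0 : 0 ≤ m % n := Int.emod_nonneg m (ne_of_gt hn)
    have hslt : m % n < n := Int.emod_lt_of_pos m hn
    have e1 : g • ((h ^ m : G) • o) = (h ^ (ε * (n * (m / n))) : G) • ((g * h ^ (m % n)) • o) := by
      rw [smul_smul, smul_smul]
      congr 1
      calc g * h ^ m = g * h ^ (n * (m / n)) * h ^ (m % n) := by
            rw [mul_assoc, ← zpow_add, Int.mul_ediv_add_emod m n]
        _ = h ^ (ε * (n * (m / n))) * (g * h ^ (m % n)) := by rw [hmul (m / n)]; group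
    show infDist (g • ((h ^ m : G) • o)) (cyclicOrbit o h) ≤ c * (n:ℝ) + c + dist o (g • o) + 1
    rw [e1, EA_infDist_zpow hiso o h _ _]
    have e3 : infDist ((g * h ^ (m % n)) • o) (cyclicOrbit o h)
        ≤ dist ((g * h ^ (m % n)) • o) o := Metric.infDist_le_dist_of_mem (EA_o_mem_orbit o h)
    have e4 : dist ((g * h ^ (m % n)) • o) o
        ≤ dist ((h ^ (m % n) : G) • o) o + dist o (g • o) := by
      calc dist ((g * h ^ (m % n)) • o) o
          ≤ dist ((g * h ^ (m % n)) • o) (g • o) + dist (g • o) o := dist_triangle _ _ _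
        _ = dist ((h ^ (m % n) : G) • o) o + dist o (g • o) := by
            rw [show (g * h ^ (m % n)) • o = g • ((h ^ (m % n) : G) • o) from mul_smul _ _ _,
              EA_dist_smul hiso, dist_comm (g • o) o]
    have e5 := hzs (m % n) hs0 hslt
    linarith
  · rintro y ⟨m, rfl⟩
    obtain ⟨m', hm'⟩ : ∃ m' : ℤ, m' = ε * m := ⟨ε * m, rfl⟩
    have hmm : m = ε * m' := by rcases hε with rfl | rfl <;> rw [hm'] <;> ring
    have hs0 : 0 ≤ m' % n := Int.emod_nonneg m' (ne_of_gt hn)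
    have hslt : m' % n < n := Int.emod_lt_of_pos m' hn
    have hmeq : m = ε * (n * (m' / n)) + ε * (m' % n) := by
      have h' := Int.mul_ediv_add_emod m' n
      calc m = ε * m' := hmm
        _ = ε * (n * (m' / n)) + ε * (m' % n) := by linear_combination (-ε) * h'
    have e0 : (h ^ m : G) • o = ((g * h ^ (n * (m' / n)) * g⁻¹) * h ^ (ε * (m' % n))) • o := by
      rw [hmeq, zpow_add, ← hconv (m' / n)]
    show infDist ((h ^ m : G) • o) ((g • ·) '' cyclicOrbit o h)
        ≤ c * (n:ℝ) + c + dist o (g • o) + 1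
    rw [e0]
    have hz : g • ((h ^ (n * (m' / n)) : G) • o) ∈ (g • ·) '' cyclicOrbit o h :=
      ⟨(h ^ (n * (m' / n)) : G) • o, ⟨n * (m' / n), rfl⟩, rfl⟩
    have e1 : infDist (((g * h ^ (n * (m' / n)) * g⁻¹) * h ^ (ε * (m' % n))) • o)
          ((g • ·) '' cyclicOrbit o h)
        ≤ dist (((g * h ^ (n * (m' / n)) * g⁻¹) * h ^ (ε * (m' % n))) • o)
          (g • ((h ^ (n * (m' / n)) : G) • o)) := Metric.infDist_le_dist_of_mem hz
    have e2 : dist (((g * h ^ (n * (m' / n)) * g⁻¹) * h ^ (ε * (m' % n))) • o)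
          (g • ((h ^ (n * (m' / n)) : G) • o))
        ≤ dist ((h ^ (ε * (m' % n)) : G) • o) o + dist o (g • o) := by
      have hrw1 : ((g * h ^ (n * (m' / n)) * g⁻¹) * h ^ (ε * (m' % n))) • o
          = (g * h ^ (n * (m' / n))) • ((g⁻¹ * h ^ (ε * (m' % n))) • o) := by
        rw [smul_smul]
        congr 1
        group
      have hrw2 : g • ((h ^ (n * (m' / n)) : G) • o) = (g * h ^ (n * (m' / n))) • o :=
        (mul_smul _ _ _).symm
      rw [hrw1, hrw2, EA_dist_smul hiso]
      calc dist ((g⁻¹ * h ^ (ε * (m' % n))) • o) o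
          ≤ dist ((g⁻¹ * h ^ (ε * (m' % n))) • o) (g⁻¹ • o) + dist (g⁻¹ • o) o :=
            dist_triangle _ _ _
        _ = dist ((h ^ (ε * (m' % n)) : G) • o) o + dist o (g • o) := by
            rw [show (g⁻¹ * h ^ (ε * (m' % n))) • o = g⁻¹ • ((h ^ (ε * (m' % n)) : G) • o) from
              mul_smul _ _ _, EA_dist_smul hiso]
            congr 1
            rw [← EA_dist_smul hiso g (g⁻¹ • o) o, smul_inv_smul]
    have e3 : dist ((h ^ (ε * (m' % n)) : G) • o) o ≤ c * (n:ℝ) + c := by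
      have e := (hqi (ε * (m' % n)) 0).2
      simp only [zpow_zero, one_smul] at e
      have habs : |((ε * (m' % n) : ℤ) : ℝ) - ((0 : ℤ) : ℝ)| = ((m' % n : ℤ) : ℝ) := by
        push_cast
        rw [sub_zero]
        rcases hε with rfl | rfl
        · push_cast
          rw [one_mul, abs_of_nonneg (by exact_mod_cast hs0)]
        · push_cast
          rw [neg_one_mul, abs_neg, abs_of_nonneg (by exact_mod_cast hs0)]
      rw [habs] at e
      have hsn : ((m' % n : ℤ) : ℝ) ≤ (n:ℝ) := by exact_mod_cast hslt.le
      nlinarith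
    linarith

end EAux5

/-- structure of `E(h)` for a contracting element `h`. -/
theorem Egroup_structure
    {Y G : Type*} [MetricSpace Y] [ProperSpace Y] [Group G] [MulAction G Y]
    (hgeo : GeodesicSpace Y)
    (hiso : ∀ g : G, Isometry (fun y : Y => g • y))
    (o : Y)
    (hproper : ∀ r : ℝ, {g : G | dist o (g • o) ≤ r}.Finite)
    (h : G) (hc : IsContractingElement o h) :
    (∃ T : Finset G, ∀ g ∈ Egroup o h, ∃ t ∈ T, ∃ n : ℤ, g = t * h ^ n) ∧
      Egroup o h = {g : G | ∃ n : ℤ, 0 < n ∧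
        (g * h ^ n * g⁻¹ = h ^ n ∨ g * h ^ n * g⁻¹ = h ^ (-n))} := by
  classical
  obtain ⟨hord, ⟨C, hC1, hCc⟩, ⟨c, hc1, hqi⟩⟩ := hc
  have hXne : (cyclicOrbit o h).Nonempty := EA_orbit_ne o h
  have hXcl : IsClosed (cyclicOrbit o h) := by
    rw [EA_orbit_eq o h]
    exact EA_isClosed_orbit o hproper _
  have hpart2 : Egroup o h = {g : G | ∃ n : ℤ, 0 < n ∧
      (g * h ^ n * g⁻¹ = h ^ n ∨ g * h ^ n * g⁻¹ = h ^ (-n))} := by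
    ext g
    constructor
    · intro hg
      exact EA_part2_forward hiso o hproper hord hc1 hqi hg
    · rintro ⟨n, hn, hd⟩
      exact EA_part2_backward hiso o hc1 hqi hn hd
  refine ⟨?_, hpart2⟩
  have key : ∀ f : G, f ∈ Egroup o h → ∃ n : ℤ, 0 < n ∧
      (f * h ^ n * f⁻¹ = h ^ n ∨ f * h ^ n * f⁻¹ = h ^ (-n)) := by
    intro f hf
    rw [hpart2] at hf
    exact hf
  have hsel : ∀ f : G, ∃ n : ℤ, f ∈ Egroup o h →
      (0 < n ∧ (f * h ^ n * f⁻¹ = h ^ n ∨ f * h ^ n * f⁻¹ = h ^ (-n))) := by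
    intro f
    by_cases hf : f ∈ Egroup o h
    · obtain ⟨n, hn⟩ := key f hf
      exact ⟨n, fun _ => hn⟩
    · exact ⟨1, fun hf' => absurd hf' hf⟩
  choose nn hnn using hsel
  refine ⟨((hproper (5 * C)).toFinset).biUnion
      (fun f => (Finset.range (nn f).toNat).image (fun s : ℕ => h ^ (s : ℤ) * f)), ?_⟩
  intro g hg
  obtain ⟨n, hn, hd⟩ := key g hg
  obtain ⟨ε, hε, hgrel⟩ : ∃ ε : ℤ, (ε = 1 ∨ ε = -1) ∧ g * h ^ n * g⁻¹ = h ^ (ε * n) := by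
    rcases hd with hd | hd
    · exact ⟨1, Or.inl rfl, by rw [one_mul]; exact hd⟩
    · exact ⟨-1, Or.inr rfl, by rw [neg_one_mul]; exact hd⟩
  have hconv : ∀ i : ℤ, g * h ^ (n * i) * g⁻¹ = h ^ (ε * (n * i)) := by
    intro i
    have e := EA_conj_zpow hgrel i
    rwa [← zpow_mul, ← zpow_mul, mul_assoc ε n i] at e
  have hmul : ∀ i : ℤ, g * h ^ (n * i) = h ^ (ε * (n * i)) * g := by
    intro i
    calc g * h ^ (n * i) = g * h ^ (n * i) * g⁻¹ * g := by group
      _ = h ^ (ε * (n * i)) * g := by rw [hconv i]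
  obtain ⟨j, hj⟩ := exists_nat_gt (c * (C + c))
  have hc0 : (0:ℝ) < c := by linarith
  have hC0 : (0:ℝ) < C := by linarith
  obtain ⟨γ, hγs, hγt⟩ := hgeo ((g * h ^ (n * (-(j:ℤ)))) • o) ((g * h ^ (n * (j:ℤ))) • o)
  have hsrcim : (g * h ^ (n * (-(j:ℤ)))) • o ∈ γ.image :=
    ⟨0, ⟨le_refl 0, γ.len_nonneg⟩, hγs⟩
  have htgtim : (g * h ^ (n * (j:ℤ))) • o ∈ γ.image :=
    ⟨γ.len, ⟨γ.len_nonneg, le_refl _⟩, hγt⟩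
  by_cases hdip : ∃ p ∈ γ.image, Metric.infDist p (cyclicOrbit o h) < C
  · -- main case: construct coset representative
    obtain ⟨p, hpim, hpC⟩ := hdip
    have hgXcl : IsClosed ((fun y => g • y) '' cyclicOrbit o h) := by
      rw [EA_smulOrbit_eq o h g]
      exact EA_isClosed_orbit o hproper _
    have hgXne : ((fun y => g • y) '' cyclicOrbit o h).Nonempty := hXne.image _
    have hgXcontr := EA_contracting_smul hiso hCc g
    have hsrcZ : γ.source ∈ (fun y => g • y) '' cyclicOrbit o h := by
      rw [hγs]
      exact ⟨(h ^ (n * (-(j:ℤ))) : G) • o, ⟨n * (-(j:ℤ)), rfl⟩, (mul_smul _ _ _).symm⟩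
    have htgtZ : γ.target ∈ (fun y => g • y) '' cyclicOrbit o h := by
      rw [hγt]
      exact ⟨(h ^ (n * (j:ℤ)) : G) • o, ⟨n * (j:ℤ), rfl⟩, (mul_smul _ _ _).symm⟩
    have hquasi := EA_quasiconvex hC1 hgXcl hgXne hgXcontr γ hsrcZ htgtZ p hpim
    obtain ⟨yg, hygZ, hygd⟩ := hgXcl.exists_infDist_eq_dist hgXne p
    obtain ⟨x, hxX, hxd⟩ := hXcl.exists_infDist_eq_dist hXne p
    obtain ⟨x', ⟨w, rfl⟩, rfl⟩ := hygZ
    obtain ⟨v, rfl⟩ := hxX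
    have hgf : g = h ^ v * (h ^ (-v) * g * h ^ w) * h ^ (-w) := by group
    have hf₀E : h ^ (-v) * g * h ^ w ∈ Egroup o h := EA_Egroup_conj hiso o h hg (-v) w
    have hdistf : dist o ((h ^ (-v) * g * h ^ w) • o) ≤ 5 * C := by
      have e1 : dist o ((h ^ (-v) * g * h ^ w) • o)
          = dist ((h ^ v : G) • o) ((h ^ v : G) • ((h ^ (-v) * g * h ^ w) • o)) :=
        (EA_dist_smul hiso _ _ _).symm
      have e2 : (h ^ v : G) • ((h ^ (-v) * g * h ^ w) • o) = g • ((h ^ w : G) • o) := by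
        rw [smul_smul]
        rw [show (h : G) ^ v * (h ^ (-v) * g * h ^ w) = g * h ^ w from by group, mul_smul]
      rw [e1, e2]
      have e3 : dist p ((h ^ v : G) • o) < C := by rw [← hxd]; exact hpC
      have e4 : dist p (g • ((h ^ w : G) • o)) ≤ 4 * C := by rw [← hygd]; exact hquasi
      calc dist ((h ^ v : G) • o) (g • ((h ^ w : G) • o))
          ≤ dist ((h ^ v : G) • o) p + dist p (g • ((h ^ w : G) • o)) := dist_triangle _ _ _
        _ ≤ 5 * C := by rw [dist_comm ((h ^ v : G) • o) p]; linarith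
    have hf₀F : h ^ (-v) * g * h ^ w ∈ (hproper (5 * C)).toFinset :=
      (Set.Finite.mem_toFinset _).mpr hdistf
    obtain ⟨hn₀pos, hn₀rel⟩ := hnn (h ^ (-v) * g * h ^ w) hf₀E
    obtain ⟨ε₀, hε₀, hf₀conj⟩ : ∃ ε₀ : ℤ, (ε₀ = 1 ∨ ε₀ = -1) ∧
        (h ^ (-v) * g * h ^ w)⁻¹ * h ^ (nn (h ^ (-v) * g * h ^ w))
          * ((h ^ (-v) * g * h ^ w)⁻¹)⁻¹
          = h ^ (ε₀ * nn (h ^ (-v) * g * h ^ w)) := by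
      rcases hn₀rel with hrel0 | hrel0
      · refine ⟨1, Or.inl rfl, ?_⟩
        rw [one_mul, inv_inv]
        calc (h ^ (-v) * g * h ^ w)⁻¹ * h ^ (nn (h ^ (-v) * g * h ^ w)) * (h ^ (-v) * g * h ^ w)
            = (h ^ (-v) * g * h ^ w)⁻¹
              * ((h ^ (-v) * g * h ^ w) * h ^ (nn (h ^ (-v) * g * h ^ w))
                * (h ^ (-v) * g * h ^ w)⁻¹) * (h ^ (-v) * g * h ^ w) := by rw [hrel0]
          _ = h ^ (nn (h ^ (-v) * g * h ^ w)) := by group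
      · refine ⟨-1, Or.inr rfl, ?_⟩
        rw [neg_one_mul, inv_inv]
        have h1 : (h ^ (-v) * g * h ^ w) * h ^ (-(nn (h ^ (-v) * g * h ^ w)))
            * (h ^ (-v) * g * h ^ w)⁻¹ = h ^ (nn (h ^ (-v) * g * h ^ w)) := by
          have e := congrArg Inv.inv hrel0
          rw [show ((h ^ (-v) * g * h ^ w) * h ^ (nn (h ^ (-v) * g * h ^ w))
              * (h ^ (-v) * g * h ^ w)⁻¹)⁻¹
              = (h ^ (-v) * g * h ^ w) * (h ^ (nn (h ^ (-v) * g * h ^ w)))⁻¹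
                * (h ^ (-v) * g * h ^ w)⁻¹ from by group, ← zpow_neg, ← zpow_neg, neg_neg] at e
          exact e
        calc (h ^ (-v) * g * h ^ w)⁻¹ * h ^ (nn (h ^ (-v) * g * h ^ w)) * (h ^ (-v) * g * h ^ w)
            = (h ^ (-v) * g * h ^ w)⁻¹
              * ((h ^ (-v) * g * h ^ w) * h ^ (-(nn (h ^ (-v) * g * h ^ w)))
                * (h ^ (-v) * g * h ^ w)⁻¹) * (h ^ (-v) * g * h ^ w) := by rw [h1]
          _ = h ^ (-(nn (h ^ (-v) * g * h ^ w))) := by group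
    have hf₀conv : ∀ i : ℤ, h ^ (nn (h ^ (-v) * g * h ^ w) * i) * (h ^ (-v) * g * h ^ w)
        = (h ^ (-v) * g * h ^ w) * h ^ (ε₀ * (nn (h ^ (-v) * g * h ^ w) * i)) := by
      intro i
      have e := EA_conj_zpow hf₀conj i
      rw [← zpow_mul, ← zpow_mul, mul_assoc ε₀ (nn (h ^ (-v) * g * h ^ w)) i, inv_inv] at e
      calc h ^ (nn (h ^ (-v) * g * h ^ w) * i) * (h ^ (-v) * g * h ^ w)
          = (h ^ (-v) * g * h ^ w)
            * ((h ^ (-v) * g * h ^ w)⁻¹ * h ^ (nn (h ^ (-v) * g * h ^ w) * i)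
              * (h ^ (-v) * g * h ^ w)) := by group
        _ = (h ^ (-v) * g * h ^ w) * h ^ (ε₀ * (nn (h ^ (-v) * g * h ^ w) * i)) := by rw [e]
    have hs₀0 : 0 ≤ v % nn (h ^ (-v) * g * h ^ w) :=
      Int.emod_nonneg v (ne_of_gt hn₀pos)
    have hs₀lt : v % nn (h ^ (-v) * g * h ^ w) < nn (h ^ (-v) * g * h ^ w) :=
      Int.emod_lt_of_pos v hn₀pos
    have hfinal : g = (h ^ (v % nn (h ^ (-v) * g * h ^ w)) * (h ^ (-v) * g * h ^ w))
        * h ^ (ε₀ * (nn (h ^ (-v) * g * h ^ w) * (v / nn (h ^ (-v) * g * h ^ w))) + -w) := by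
      have hv : v = v % nn (h ^ (-v) * g * h ^ w)
          + nn (h ^ (-v) * g * h ^ w) * (v / nn (h ^ (-v) * g * h ^ w)) := by
        have := Int.mul_ediv_add_emod v (nn (h ^ (-v) * g * h ^ w))
        linarith
      calc g = h ^ v * (h ^ (-v) * g * h ^ w) * h ^ (-w) := hgf
        _ = (h ^ (v % nn (h ^ (-v) * g * h ^ w))
            * h ^ (nn (h ^ (-v) * g * h ^ w) * (v / nn (h ^ (-v) * g * h ^ w))))
              * (h ^ (-v) * g * h ^ w) * h ^ (-w) := by
            rw [← zpow_add, ← hv]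
        _ = h ^ (v % nn (h ^ (-v) * g * h ^ w))
            * (h ^ (nn (h ^ (-v) * g * h ^ w) * (v / nn (h ^ (-v) * g * h ^ w)))
              * (h ^ (-v) * g * h ^ w)) * h ^ (-w) := by
            group
        _ = h ^ (v % nn (h ^ (-v) * g * h ^ w))
            * ((h ^ (-v) * g * h ^ w)
              * h ^ (ε₀ * (nn (h ^ (-v) * g * h ^ w) * (v / nn (h ^ (-v) * g * h ^ w)))))
            * h ^ (-w) := by rw [hf₀conv]
        _ = (h ^ (v % nn (h ^ (-v) * g * h ^ w)) * (h ^ (-v) * g * h ^ w))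
            * h ^ (ε₀ * (nn (h ^ (-v) * g * h ^ w) * (v / nn (h ^ (-v) * g * h ^ w))) + -w) := by
            rw [zpow_add]
            group
    refine ⟨h ^ (v % nn (h ^ (-v) * g * h ^ w)) * (h ^ (-v) * g * h ^ w), ?_,
      ε₀ * (nn (h ^ (-v) * g * h ^ w) * (v / nn (h ^ (-v) * g * h ^ w))) + -w, hfinal⟩
    apply Finset.mem_biUnion.mpr
    refine ⟨h ^ (-v) * g * h ^ w, hf₀F, Finset.mem_image.mpr
      ⟨(v % nn (h ^ (-v) * g * h ^ w)).toNat, Finset.mem_range.mpr (by omega), ?_⟩⟩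
    rw [Int.toNat_of_nonneg hs₀0]
  · -- no-dip case: contradiction with contraction
    exfalso
    push_neg at hdip
    have hdiam := hCc γ hdip
    obtain ⟨p₀, hp₀X, hp₀d⟩ := hXcl.exists_infDist_eq_dist hXne (g • o)
    have hp₀proj : p₀ ∈ proj (cyclicOrbit o h) (g • o) := ⟨hp₀X, hp₀d.symm⟩
    have hbp' : (g * h ^ (n * (j:ℤ))) • o = (h ^ (ε * (n * (j:ℤ))) : G) • (g • o) := by
      rw [hmul, mul_smul]
    have hbm' : (g * h ^ (n * (-(j:ℤ)))) • o
        = (h ^ (ε * (n * (-(j:ℤ)))) : G) • (g • o) := by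
      rw [hmul, mul_smul]
    have hq1 : (h ^ (ε * (n * (j:ℤ))) : G) • p₀
        ∈ proj (cyclicOrbit o h) ((g * h ^ (n * (j:ℤ))) • o) := by
      rw [hbp']
      exact EA_proj_zpow hiso o h _ hp₀proj
    have hq2 : (h ^ (ε * (n * (-(j:ℤ)))) : G) • p₀
        ∈ proj (cyclicOrbit o h) ((g * h ^ (n * (-(j:ℤ)))) • o) := by
      rw [hbm']
      exact EA_proj_zpow hiso o h _ hp₀proj
    have hmem1 : (h ^ (ε * (n * (j:ℤ))) : G) • p₀ ∈ projSet (cyclicOrbit o h) γ.image :=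
      Set.mem_biUnion htgtim hq1
    have hmem2 : (h ^ (ε * (n * (-(j:ℤ)))) : G) • p₀ ∈ projSet (cyclicOrbit o h) γ.image :=
      Set.mem_biUnion hsrcim hq2
    have hbdd := EA_isBounded_projSet (cyclicOrbit o h) (EA_o_mem_orbit o h) γ
    have hdle : dist ((h ^ (ε * (n * (-(j:ℤ)))) : G) • p₀) ((h ^ (ε * (n * (j:ℤ))) : G) • p₀)
        ≤ C := le_trans (Metric.dist_le_diam_of_mem hbdd hmem2 hmem1) hdiam
    obtain ⟨σ, rfl⟩ := hp₀X
    rw [smul_smul, smul_smul, ← zpow_add, ← zpow_add] at hdle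
    have hlow := (hqi (ε * (n * (-(j:ℤ))) + σ) (ε * (n * (j:ℤ)) + σ)).1
    have habs : |((ε * (n * (-(j:ℤ))) + σ : ℤ) : ℝ) - ((ε * (n * (j:ℤ)) + σ : ℤ) : ℝ)|
        = 2 * (n : ℝ) * (j : ℝ) := by
      have hn0 : (0:ℝ) ≤ (n:ℝ) := by exact_mod_cast hn.le
      have hj0 : (0:ℝ) ≤ (j:ℝ) := Nat.cast_nonneg j
      rcases hε with rfl | rfl
      · push_cast
        rw [show ((1:ℝ) * ((n:ℝ) * -(j:ℝ)) + (σ:ℝ)) - ((1:ℝ) * ((n:ℝ) * (j:ℝ)) + (σ:ℝ))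
            = -(2 * (n:ℝ) * (j:ℝ)) from by ring, abs_neg,
          abs_of_nonneg (by positivity)]
      · push_cast
        rw [show ((-1:ℝ) * ((n:ℝ) * -(j:ℝ)) + (σ:ℝ)) - ((-1:ℝ) * ((n:ℝ) * (j:ℝ)) + (σ:ℝ))
            = 2 * (n:ℝ) * (j:ℝ) from by ring, abs_of_nonneg (by positivity)]
    rw [habs] at hlow
    have hlow2 : 2 * (n:ℝ) * (j:ℝ) / c - c ≤ C := le_trans hlow hdle
    have hA : 2 * (n:ℝ) * (j:ℝ) ≤ (C + c) * c := by
      have hlow3 : 2 * (n:ℝ) * (j:ℝ) / c ≤ C + c := by linarith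
      exact (div_le_iff₀ hc0).mp hlow3
    have hn1 : (1:ℝ) ≤ (n:ℝ) := by exact_mod_cast hn
    have hj1 : (j:ℝ) ≤ 2 * (n:ℝ) * (j:ℝ) := by nlinarith [Nat.cast_nonneg (α := ℝ) j]
    nlinarith
end

section
/- Let a group G act properly by isometries on a proper geodesic metric space (Y,d) with basepoint o, and let h₁, h₂ ∈ G be two contracting elements. Then either the orbits ⟨h₁⟩·o and ⟨h₂⟩·o have bounded intersection (for every r > 0 the set N_r(⟨h₁⟩·o) ∩ N_r(⟨h₂⟩·o) has finite diameter), or they have finite Hausdorff distance and h₁ ∈ E(h₂). -/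
open Metric Set Filter

section AuxDichotomy

variable {Y G : Type*} [MetricSpace Y] [Group G] [MulAction G Y]

lemma near_orbit_pos (hiso : ∀ g : G, Isometry (fun y : Y => g • y)) (o : Y)
    (u v : G) (a b : ℤ) (ha : 0 < a) (heq : u ^ a = v ^ b) :
    ∃ D : ℝ, ∀ m : ℤ, ∃ n : ℤ, dist (u ^ m • o) (v ^ n • o) ≤ D := by
  have hne : (Finset.Icc (0:ℤ) a).Nonempty := ⟨0, Finset.mem_Icc.2 ⟨le_refl 0, ha.le⟩⟩
  refine ⟨(Finset.Icc (0:ℤ) a).sup' hne (fun s => dist o (u ^ s • o)),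
    fun m => ⟨b * (m / a), ?_⟩⟩
  have hsplit : u ^ m = v ^ (b * (m / a)) * u ^ (m % a) := by
    conv_lhs => rw [← Int.mul_ediv_add_emod m a]
    rw [zpow_add, zpow_mul, heq, zpow_mul]
  rw [hsplit, mul_smul]
  have hdist : dist (v ^ (b * (m / a)) • u ^ (m % a) • o) (v ^ (b * (m / a)) • o)
      = dist (u ^ (m % a) • o) o := (hiso _).dist_eq _ _
  rw [hdist, dist_comm]
  exact Finset.le_sup' (fun s => dist o (u ^ s • o))
    (Finset.mem_Icc.2 ⟨Int.emod_nonneg m ha.ne', (Int.emod_lt_of_pos m ha).le⟩)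

lemma near_orbit (hiso : ∀ g : G, Isometry (fun y : Y => g • y)) (o : Y)
    (u v : G) (a b : ℤ) (ha : a ≠ 0) (heq : u ^ a = v ^ b) :
    ∃ D : ℝ, ∀ m : ℤ, ∃ n : ℤ, dist (u ^ m • o) (v ^ n • o) ≤ D := by
  rcases ha.lt_or_gt with h | h
  · have heq' : u ^ (-a) = v ^ (-b) := by rw [zpow_neg, zpow_neg, heq]
    exact near_orbit_pos hiso o u v (-a) (-b) (by linarith) heq'
  · exact near_orbit_pos hiso o u v a b h heq

lemma haus_ne_top (hiso : ∀ g : G, Isometry (fun y : Y => g • y)) (o : Y)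
    (u v : G) (a b : ℤ) (ha : a ≠ 0) (hb : b ≠ 0) (heq : u ^ a = v ^ b) :
    EMetric.hausdorffEdist (cyclicOrbit o u) (cyclicOrbit o v) ≠ ⊤ := by
  obtain ⟨D₁, hD₁⟩ := near_orbit hiso o u v a b ha heq
  obtain ⟨D₂, hD₂⟩ := near_orbit hiso o v u b a hb heq.symm
  set D := max D₁ D₂ with hD
  have h1 : ∀ x ∈ cyclicOrbit o u, ∃ y ∈ cyclicOrbit o v, edist x y ≤ ENNReal.ofReal D := by
    rintro _ ⟨m, rfl⟩
    obtain ⟨n, hn⟩ := hD₁ m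
    exact ⟨v ^ n • o, ⟨n, rfl⟩, by
      rw [edist_dist]; exact ENNReal.ofReal_le_ofReal (hn.trans (le_max_left _ _))⟩
  have h2 : ∀ x ∈ cyclicOrbit o v, ∃ y ∈ cyclicOrbit o u, edist x y ≤ ENNReal.ofReal D := by
    rintro _ ⟨m, rfl⟩
    obtain ⟨n, hn⟩ := hD₂ m
    exact ⟨u ^ n • o, ⟨n, rfl⟩, by
      rw [edist_dist]; exact ENNReal.ofReal_le_ofReal (hn.trans (le_max_right _ _))⟩
  exact ne_top_of_le_ne_top ENNReal.ofReal_ne_top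
    (EMetric.hausdorffEdist_le_of_mem_edist h1 h2)

lemma mem_Egroup_of_zpow_eq (hiso : ∀ g : G, Isometry (fun y : Y => g • y)) (o : Y)
    (u v : G) (a b : ℤ) (hb : 0 < b) (heq : u ^ a = v ^ b) :
    u ∈ Egroup o v := by
  have hcomm : ∀ q : ℤ, u * v ^ (b * q) = v ^ (b * q) * u := by
    intro q
    have hv : v ^ (b * q) = u ^ (a * q) := by
      rw [zpow_mul, zpow_mul, heq]
    rw [hv]
    exact ((Commute.refl u).zpow_right (a * q)).eq
  have hne : (Finset.Icc (0:ℤ) b).Nonempty := ⟨0, Finset.mem_Icc.2 ⟨le_refl 0, hb.le⟩⟩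
  set D₂ := (Finset.Icc (0:ℤ) b).sup' hne (fun s => dist o ((u * v ^ s) • o)) with hD₂def
  set D₃ := (Finset.Icc (0:ℤ) b).sup' hne (fun s => dist (v ^ s • o) (u • o)) with hD₃def
  have hD₂0 : (0:ℝ) ≤ D₂ :=
    le_trans dist_nonneg (Finset.le_sup' (fun s => dist o ((u * v ^ s) • o))
      (Finset.mem_Icc.2 ⟨le_refl (0:ℤ), hb.le⟩))
  refine ⟨max D₂ D₃ + 1, by
      have := le_max_left D₂ D₃; linarith, ?_, ?_⟩
  · rintro _ ⟨_, ⟨nn, rfl⟩, rfl⟩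
    set q := nn / b with hq
    set s := nn % b with hs
    have hsmem : s ∈ Finset.Icc (0:ℤ) b :=
      Finset.mem_Icc.2 ⟨Int.emod_nonneg nn hb.ne', (Int.emod_lt_of_pos nn hb).le⟩
    have key : u • (v ^ nn • o) = v ^ (b * q) • ((u * v ^ s) • o) := by
      rw [← mul_smul, ← mul_smul]
      congr 1
      calc u * v ^ nn = u * (v ^ (b * q) * v ^ s) := by
            rw [← zpow_add]
            congr 1
            rw [hq, hs, Int.mul_ediv_add_emod nn b]
        _ = (u * v ^ (b * q)) * v ^ s := by rw [mul_assoc]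
        _ = (v ^ (b * q) * u) * v ^ s := by rw [hcomm q]
        _ = v ^ (b * q) * (u * v ^ s) := by rw [mul_assoc]
    have hmem : v ^ (b * q) • o ∈ cyclicOrbit o v := ⟨b * q, rfl⟩
    refine le_trans (Metric.infDist_le_dist_of_mem hmem) ?_
    simp only
    rw [key]
    have heqd : dist (v ^ (b * q) • ((u * v ^ s) • o)) (v ^ (b * q) • o)
        = dist ((u * v ^ s) • o) o := (hiso _).dist_eq _ _
    rw [heqd, dist_comm]
    have hle : dist o ((u * v ^ s) • o) ≤ D₂ :=
      Finset.le_sup' (fun s => dist o ((u * v ^ s) • o)) hsmem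
    have := le_max_left D₂ D₃
    linarith
  · rintro _ ⟨nn, rfl⟩
    set q := nn / b with hq
    set s := nn % b with hs
    have hsmem : s ∈ Finset.Icc (0:ℤ) b :=
      Finset.mem_Icc.2 ⟨Int.emod_nonneg nn hb.ne', (Int.emod_lt_of_pos nn hb).le⟩
    have hmem : u • (v ^ (b * q) • o) ∈ (u • ·) '' cyclicOrbit o v :=
      ⟨v ^ (b * q) • o, ⟨b * q, rfl⟩, rfl⟩
    refine le_trans (Metric.infDist_le_dist_of_mem hmem) ?_
    have key1 : v ^ nn • o = v ^ (b * q) • (v ^ s • o) := by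
      rw [← mul_smul, ← zpow_add]
      congr 2
      rw [hq, hs, Int.mul_ediv_add_emod nn b]
    have key2 : u • (v ^ (b * q) • o) = v ^ (b * q) • (u • o) := by
      rw [← mul_smul, hcomm q, mul_smul]
    rw [key1, key2]
    have heqd : dist (v ^ (b * q) • (v ^ s • o)) (v ^ (b * q) • (u • o))
        = dist (v ^ s • o) (u • o) := (hiso _).dist_eq _ _
    rw [heqd]
    have hle : dist (v ^ s • o) (u • o) ≤ D₃ :=
      Finset.le_sup' (fun s => dist (v ^ s • o) (u • o)) hsmem
    have := le_max_right D₂ D₃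
    linarith

lemma exists_zpow_eq_of_unbounded
    (hiso : ∀ g : G, Isometry (fun y : Y => g • y)) (o : Y)
    (hproper : ∀ r : ℝ, {g : G | dist o (g • o) ≤ r}.Finite)
    (h₁ h₂ : G) (hfin : ¬ IsOfFinOrder h₁) (r : ℝ)
    (hun : ¬ Bornology.IsBounded
        ({y : Y | Metric.infDist y (cyclicOrbit o h₁) ≤ r} ∩
          {y : Y | Metric.infDist y (cyclicOrbit o h₂) ≤ r})) :
    ∃ a b : ℤ, a ≠ 0 ∧ b ≠ 0 ∧ h₁ ^ a = h₂ ^ b := by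
  classical
  have hX₁ : o ∈ cyclicOrbit o h₁ := ⟨0, by simp⟩
  have hX₂ : o ∈ cyclicOrbit o h₂ := ⟨0, by simp⟩
  have step : ∀ k : ℕ, ∃ m n : ℤ,
      (k : ℝ) - (r + 1) ≤ dist o (h₁ ^ m • o) ∧
        dist (h₁ ^ m • o) (h₂ ^ n • o) ≤ 2 * r + 2 := by
    intro k
    have hy : ∃ y ∈ ({y : Y | Metric.infDist y (cyclicOrbit o h₁) ≤ r} ∩
        {y : Y | Metric.infDist y (cyclicOrbit o h₂) ≤ r}), (k : ℝ) < dist o y := by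
      by_contra hcon
      push_neg at hcon
      exact hun ((Metric.isBounded_closedBall (x := o) (r := (k:ℝ))).subset
        (fun y hy => Metric.mem_closedBall'.2 (hcon y hy)))
    obtain ⟨y, ⟨hy1, hy2⟩, hky⟩ := hy
    have h1 : Metric.infDist y (cyclicOrbit o h₁) < r + 1 := lt_of_le_of_lt hy1 (by linarith)
    have h2 : Metric.infDist y (cyclicOrbit o h₂) < r + 1 := lt_of_le_of_lt hy2 (by linarith)
    obtain ⟨x₁, hx₁, hdx₁⟩ := (Metric.infDist_lt_iff ⟨o, hX₁⟩).1 h1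
    obtain ⟨x₂, hx₂, hdx₂⟩ := (Metric.infDist_lt_iff ⟨o, hX₂⟩).1 h2
    obtain ⟨m, rfl⟩ := hx₁
    obtain ⟨n, rfl⟩ := hx₂
    refine ⟨m, n, ?_, ?_⟩
    · have h4 := dist_triangle o (h₁ ^ m • o) y
      have h5 : dist (h₁ ^ m • o) y = dist y (h₁ ^ m • o) := dist_comm _ _
      linarith
    · have := dist_triangle (h₁ ^ m • o) y (h₂ ^ n • o)
      have h3 : dist (h₁ ^ m • o) y = dist y (h₁ ^ m • o) := dist_comm _ _
      linarith
  choose m n hm hmn using step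
  set g : ℕ → G := fun k => (h₂ ^ (n k))⁻¹ * h₁ ^ (m k) with hgdef
  have hg : ∀ k, dist o (g k • o) ≤ 2 * r + 2 := by
    intro k
    have hsm : g k • o = (h₂ ^ (n k))⁻¹ • (h₁ ^ (m k) • o) := mul_smul _ _ _
    rw [hsm]
    calc dist o ((h₂ ^ (n k))⁻¹ • (h₁ ^ (m k) • o))
        = dist ((h₂ ^ (n k))⁻¹ • (h₂ ^ (n k) • o)) ((h₂ ^ (n k))⁻¹ • (h₁ ^ (m k) • o)) := by
          rw [inv_smul_smul]
      _ = dist (h₂ ^ (n k) • o) (h₁ ^ (m k) • o) := (hiso _).dist_eq _ _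
      _ = dist (h₁ ^ (m k) • o) (h₂ ^ (n k) • o) := dist_comm _ _
      _ ≤ 2 * r + 2 := hmn k
  have hrange : (Set.range g).Finite :=
    (hproper (2 * r + 2)).subset (by rintro _ ⟨k, rfl⟩; exact hg k)
  have hkey : ∃ k k' : ℕ, g k = g k' ∧ m k ≠ m k' := by
    by_contra hcon
    push_neg at hcon
    have hmfin : (Set.range m).Finite := by
      have hsub : Set.range m ⊆
          (fun x : G => if h : ∃ k, g k = x then m h.choose else 0) '' (Set.range g) := by
        rintro _ ⟨k, rfl⟩
        refine ⟨g k, ⟨k, rfl⟩, ?_⟩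
        have hex : ∃ k', g k' = g k := ⟨k, rfl⟩
        simp only [dif_pos hex]
        exact hcon _ _ hex.choose_spec
      exact (hrange.image _).subset hsub
    have hdfin : (Set.range (fun k => dist o (h₁ ^ (m k) • o))).Finite := by
      have hsub : Set.range (fun k => dist o (h₁ ^ (m k) • o)) ⊆
          (fun j : ℤ => dist o (h₁ ^ j • o)) '' (Set.range m) := by
        rintro _ ⟨k, rfl⟩
        exact ⟨m k, ⟨k, rfl⟩, rfl⟩
      exact (hmfin.image _).subset hsub
    obtain ⟨B, hB⟩ := hdfin.bddAbove
    obtain ⟨k, hk⟩ := exists_nat_gt (B + r + 1)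
    have h1 := hm k
    have h2 : dist o (h₁ ^ (m k) • o) ≤ B := hB ⟨k, rfl⟩
    linarith
  obtain ⟨k, k', hgg, hmm⟩ := hkey
  have hgg' : (h₂ ^ (n k))⁻¹ * h₁ ^ (m k) = (h₂ ^ (n k'))⁻¹ * h₁ ^ (m k') := hgg
  have heq : h₁ ^ (m k - m k') = h₂ ^ (n k - n k') := by
    rw [zpow_sub, zpow_sub]
    calc h₁ ^ (m k) * (h₁ ^ (m k'))⁻¹
        = h₂ ^ (n k) * ((h₂ ^ (n k))⁻¹ * h₁ ^ (m k)) * (h₁ ^ (m k'))⁻¹ := by group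
      _ = h₂ ^ (n k) * ((h₂ ^ (n k'))⁻¹ * h₁ ^ (m k')) * (h₁ ^ (m k'))⁻¹ := by rw [hgg']
      _ = h₂ ^ (n k) * (h₂ ^ (n k'))⁻¹ := by group
  refine ⟨m k - m k', n k - n k', sub_ne_zero.2 hmm, ?_, heq⟩
  intro hb0
  rw [hb0, zpow_zero] at heq
  apply hfin
  have ha : m k - m k' ≠ 0 := sub_ne_zero.2 hmm
  have hnat : h₁ ^ ((m k - m k').natAbs) = 1 := by
    have h' : h₁ ^ (((m k - m k').natAbs : ℤ)) = 1 := by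
      rcases Int.natAbs_eq (m k - m k') with he | he
      · rw [← he, heq]
      · rw [← neg_neg (((m k - m k').natAbs : ℤ)), ← he, zpow_neg, heq, inv_one]
    rwa [zpow_natCast] at h'
  exact isOfFinOrder_iff_pow_eq_one.2 ⟨(m k - m k').natAbs, Int.natAbs_pos.2 ha, hnat⟩

end AuxDichotomy

/-- dichotomy for orbits of two contracting elements. -/
theorem contracting_elements_dichotomy
    {Y G : Type*} [MetricSpace Y] [ProperSpace Y] [Group G] [MulAction G Y]
    (hgeo : GeodesicSpace Y)
    (hiso : ∀ g : G, Isometry (fun y : Y => g • y))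
    (o : Y)
    (hproper : ∀ r : ℝ, {g : G | dist o (g • o) ≤ r}.Finite)
    (h₁ h₂ : G)
    (hc1 : IsContractingElement o h₁) (hc2 : IsContractingElement o h₂) :
    (∀ r : ℝ, 0 < r → Bornology.IsBounded
        ({y : Y | Metric.infDist y (cyclicOrbit o h₁) ≤ r} ∩
          {y : Y | Metric.infDist y (cyclicOrbit o h₂) ≤ r})) ∨
      (EMetric.hausdorffEdist (cyclicOrbit o h₁) (cyclicOrbit o h₂) ≠ ⊤ ∧
        h₁ ∈ Egroup o h₂) := by
  by_cases hL : ∀ r : ℝ, 0 < r → Bornology.IsBounded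
      ({y : Y | Metric.infDist y (cyclicOrbit o h₁) ≤ r} ∩
        {y : Y | Metric.infDist y (cyclicOrbit o h₂) ≤ r})
  · exact Or.inl hL
  · push_neg at hL
    obtain ⟨r, hr, hun⟩ := hL
    obtain ⟨a, b, ha, hb, heq⟩ :=
      exists_zpow_eq_of_unbounded hiso o hproper h₁ h₂ hc1.1 r hun
    right
    refine ⟨haus_ne_top hiso o h₁ h₂ a b ha hb heq, ?_⟩
    rcases hb.lt_or_gt with hbneg | hbpos
    · have heq' : h₁ ^ (-a) = h₂ ^ (-b) := by rw [zpow_neg, zpow_neg, heq]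
      exact mem_Egroup_of_zpow_eq hiso o h₁ h₂ (-a) (-b) (by linarith) heq'
    · exact mem_Egroup_of_zpow_eq hiso o h₁ h₂ a b hbpos heq
end

section
/- Let k ≥ 1 be an integer and let (a_n)_{n≥1} be a sequence of positive real numbers satisfying a_n·a_m ≤ Σ_{j=−k}^{k} a_{n+m−j} for all integers n, m ≥ 1 with n + m − k ≥ 1. Then the limit ω := lim_{n→∞} (1/n)·log(a₁ + a₂ + ⋯ + a_n) exists (as an element of ℝ ∪ {−∞, +∞}), and if ω < ∞ then there is a constant c > 0 such that a_n ≤ c·exp(n·ω) for all n ≥ 1. -/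
open Filter Finset


lemma peigne_S_mono (a : ℕ → ℝ) (hpos : ∀ n : ℕ, 1 ≤ n → 0 < a n)
    {n m : ℕ} (h : n ≤ m) :
    ∑ i ∈ Finset.Icc 1 n, a i ≤ ∑ i ∈ Finset.Icc 1 m, a i := by
  apply Finset.sum_le_sum_of_subset_of_nonneg (Finset.Icc_subset_Icc_right h)
  intro i hi _
  exact (hpos i (Finset.mem_Icc.mp hi).1).le

lemma peigne_a_le_S (a : ℕ → ℝ) (hpos : ∀ n : ℕ, 1 ≤ n → 0 < a n)
    {m n : ℕ} (hm : 1 ≤ m) (hmn : m ≤ n) :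
    a m ≤ ∑ i ∈ Finset.Icc 1 n, a i := by
  apply Finset.single_le_sum (fun i hi => (hpos i (Finset.mem_Icc.mp hi).1).le)
  exact Finset.mem_Icc.mpr ⟨hm, hmn⟩

lemma peigne_S_pos (a : ℕ → ℝ) (hpos : ∀ n : ℕ, 1 ≤ n → 0 < a n)
    {n : ℕ} (hn : 1 ≤ n) : 0 < ∑ i ∈ Finset.Icc 1 n, a i :=
  lt_of_lt_of_le (hpos 1 le_rfl) (peigne_a_le_S a hpos le_rfl hn)

lemma peigne_key (k : ℕ) (hk : 1 ≤ k) (a : ℕ → ℝ)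
    (hpos : ∀ n : ℕ, 1 ≤ n → 0 < a n)
    (hsub : ∀ n m : ℕ, 1 ≤ n → 1 ≤ m → k + 1 ≤ n + m →
      a n * a m ≤ ∑ j ∈ Finset.range (2 * k + 1), a (n + m - k + j))
    {m n : ℕ} (hm : k ≤ m) (hn : 1 ≤ n) :
    a m * (∑ i ∈ Finset.Icc 1 n, a i) ≤
      ((2 * k + 1 : ℕ) : ℝ) * ∑ i ∈ Finset.Icc 1 (n + m + k), a i := by
  rw [Finset.mul_sum]
  have step1 : ∀ i ∈ Finset.Icc 1 n, a m * a i ≤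
      ∑ j ∈ Finset.range (2 * k + 1), a (m + i - k + j) := by
    intro i hi
    have hi1 : 1 ≤ i := (Finset.mem_Icc.mp hi).1
    exact hsub m i (le_trans hk hm) hi1 (by omega)
  calc ∑ i ∈ Finset.Icc 1 n, a m * a i
      ≤ ∑ i ∈ Finset.Icc 1 n, ∑ j ∈ Finset.range (2 * k + 1), a (m + i - k + j) :=
        Finset.sum_le_sum step1
    _ = ∑ j ∈ Finset.range (2 * k + 1), ∑ i ∈ Finset.Icc 1 n, a (m + i - k + j) :=
        Finset.sum_comm
    _ ≤ ∑ _j ∈ Finset.range (2 * k + 1), ∑ i ∈ Finset.Icc 1 (n + m + k), a i := by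
        apply Finset.sum_le_sum
        intro j hj
        have hj' : j ≤ 2 * k := by
          have := Finset.mem_range.mp hj; omega
        have hrw : ∀ i ∈ Finset.Icc 1 n, a (m + i - k + j) = a (i + (m - k + j)) := by
          intro i hi; congr 1; omega
        rw [Finset.sum_congr rfl hrw]
        have : ∑ i ∈ Finset.Icc 1 n, a (i + (m - k + j)) =
            ∑ i ∈ Finset.Icc (1 + (m - k + j)) (n + (m - k + j)), a i := by
          rw [← Finset.map_add_right_Icc, Finset.sum_map]
          rfl
        rw [this]
        apply Finset.sum_le_sum_of_subset_of_nonneg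
        · apply Finset.Icc_subset_Icc <;> omega
        · intro i hi _
          exact (hpos i (Finset.mem_Icc.mp hi).1).le
    _ = ((2 * k + 1 : ℕ) : ℝ) * ∑ i ∈ Finset.Icc 1 (n + m + k), a i := by
        rw [Finset.sum_const, Finset.card_range, nsmul_eq_mul]



lemma peigne_iter (k : ℕ) (hk : 1 ≤ k) (a : ℕ → ℝ)
    (hpos : ∀ n : ℕ, 1 ≤ n → 0 < a n)
    (hsub : ∀ n m : ℕ, 1 ≤ n → 1 ≤ m → k + 1 ≤ n + m →
      a n * a m ≤ ∑ j ∈ Finset.range (2 * k + 1), a (n + m - k + j))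
    {m : ℕ} (hm : k ≤ m) (q : ℕ) :
    (a m / ((2 * k + 1 : ℕ) : ℝ)) ^ q * (∑ i ∈ Finset.Icc 1 m, a i) ≤
      ∑ i ∈ Finset.Icc 1 (m + q * (m + k)), a i := by
  have hm1 : 1 ≤ m := le_trans hk hm
  have hC : (0:ℝ) < ((2 * k + 1 : ℕ) : ℝ) := by positivity
  induction q with
  | zero => simp
  | succ q ih =>
    have hn1 : 1 ≤ m + q * (m + k) := by omega
    have h1 := peigne_key k hk a hpos hsub hm hn1
    have hidx : m + q * (m + k) + m + k = m + (q + 1) * (m + k) := by ring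
    rw [hidx] at h1
    have ham : 0 < a m := hpos m hm1
    have h2 : (a m / ((2 * k + 1 : ℕ) : ℝ)) * (∑ i ∈ Finset.Icc 1 (m + q * (m + k)), a i)
        ≤ ∑ i ∈ Finset.Icc 1 (m + (q + 1) * (m + k)), a i := by
      rw [div_mul_eq_mul_div, div_le_iff₀ hC]
      linarith [h1]
    calc (a m / ((2 * k + 1 : ℕ) : ℝ)) ^ (q + 1) * (∑ i ∈ Finset.Icc 1 m, a i)
        = (a m / ((2 * k + 1 : ℕ) : ℝ)) *
            ((a m / ((2 * k + 1 : ℕ) : ℝ)) ^ q * (∑ i ∈ Finset.Icc 1 m, a i)) := by ring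
      _ ≤ (a m / ((2 * k + 1 : ℕ) : ℝ)) * (∑ i ∈ Finset.Icc 1 (m + q * (m + k)), a i) := by
          apply mul_le_mul_of_nonneg_left ih (by positivity)
      _ ≤ _ := h2


lemma peigne_T1 (k m : ℕ) (hm : 1 ≤ m) :
    Tendsto (fun n : ℕ => (((n - m) / (m + k) : ℕ) : ℝ) / (n : ℝ)) atTop
      (nhds (1 / ((m + k : ℕ) : ℝ))) := by
  have hp : (0:ℝ) < ((m + k : ℕ) : ℝ) := by positivity
  apply tendsto_of_tendsto_of_tendsto_of_le_of_le'
      (g := fun n : ℕ => 1 / ((m + k : ℕ) : ℝ) - (((m + (m + k) : ℕ) : ℝ) / ((m + k : ℕ) : ℝ)) / (n : ℝ))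
      (h := fun _ : ℕ => 1 / ((m + k : ℕ) : ℝ))
  · have := tendsto_const_div_atTop_nhds_zero_nat
      (((m + (m + k) : ℕ) : ℝ) / ((m + k : ℕ) : ℝ))
    have h2 := (tendsto_const_nhds (x := 1 / ((m + k : ℕ) : ℝ)) (f := atTop (α := ℕ))).sub this
    simpa using h2
  · exact tendsto_const_nhds
  · filter_upwards [eventually_ge_atTop (m + (m + k))] with n hn
    set q := (n - m) / (m + k) with hq
    have h2 : n - m < (q + 1) * (m + k) := by
      have h := Nat.div_add_mod (n - m) (m + k)
      have h2 := Nat.mod_lt (n - m) (y := m + k) (by omega)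
      calc n - m = (m + k) * q + (n - m) % (m + k) := h.symm
        _ < (m + k) * q + (m + k) := by omega
        _ = (q + 1) * (m + k) := by ring
    have hn0 : (0:ℝ) < (n:ℝ) := by
      have h1 : 1 ≤ n := by omega
      exact_mod_cast h1
    have h2' : (n:ℝ) - m < ((q:ℝ) + 1) * ((m + k : ℕ) : ℝ) := by
      have hmn : m ≤ n := by omega
      have hc : ((n - m : ℕ) : ℝ) = (n:ℝ) - m := by push_cast [hmn]; ring
      rw [← hc]; exact_mod_cast h2
    have key : (n:ℝ) - ((m + (m + k) : ℕ) : ℝ) ≤ (q:ℝ) * ((m + k : ℕ) : ℝ) := by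
      push_cast at h2' ⊢; nlinarith [h2']
      -- fallback
    have heq : 1 / ((m + k : ℕ) : ℝ) - (((m + (m + k) : ℕ) : ℝ) / ((m + k : ℕ) : ℝ)) / (n : ℝ)
        = ((n:ℝ) - ((m + (m + k) : ℕ) : ℝ)) / (((m + k : ℕ) : ℝ) * n) := by
      field_simp
    rw [heq, div_le_div_iff₀ (by positivity) hn0]
    nlinarith [key, hn0, hp]
  · filter_upwards [eventually_ge_atTop 1] with n hn
    set q := (n - m) / (m + k) with hq
    have h1 : q * (m + k) ≤ n - m := Nat.div_mul_le_self _ _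
    have h1' : (q:ℝ) * ((m+k:ℕ):ℝ) ≤ (n:ℝ) := by
      have h : q * (m+k) ≤ n := by omega
      exact_mod_cast h
    have hn0 : (0:ℝ) < (n:ℝ) := by exact_mod_cast hn
    rw [div_le_div_iff₀ hn0 hp]
    nlinarith

lemma peigne_liminf_ge (k : ℕ) (hk : 1 ≤ k) (a : ℕ → ℝ)
    (hpos : ∀ n : ℕ, 1 ≤ n → 0 < a n)
    (hsub : ∀ n m : ℕ, 1 ≤ n → 1 ≤ m → k + 1 ≤ n + m →
      a n * a m ≤ ∑ j ∈ Finset.range (2 * k + 1), a (n + m - k + j))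
    {m : ℕ} (hm : k ≤ m) :
    (((Real.log (a m) - Real.log ((2 * k + 1 : ℕ) : ℝ)) / ((m + k : ℕ) : ℝ) : ℝ) : EReal) ≤
      Filter.liminf
        (fun n : ℕ => ((Real.log (∑ i ∈ Finset.Icc 1 n, a i) / (n : ℝ) : ℝ) : EReal))
        Filter.atTop := by
  have hm1 : 1 ≤ m := le_trans hk hm
  set C : ℝ := ((2 * k + 1 : ℕ) : ℝ) with hC
  have hC0 : (0:ℝ) < C := by positivity
  set d : ℝ := Real.log (a m) - Real.log C with hd
  set e : ℝ := Real.log (∑ i ∈ Finset.Icc 1 m, a i) with he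
  set g : ℕ → ℝ := fun n => ((((n - m) / (m + k) : ℕ) : ℝ) * d + e) / (n : ℝ) with hg
  have hgt : Tendsto g atTop (nhds (d / ((m + k : ℕ) : ℝ))) := by
    have T := ((peigne_T1 k m hm1).mul_const d).add
      (tendsto_const_div_atTop_nhds_zero_nat e)
    have heq : (fun n : ℕ => (((n - m) / (m + k) : ℕ) : ℝ) / (n : ℝ) * d + e / (n : ℝ))
        =ᶠ[atTop] g := by
      filter_upwards [eventually_ge_atTop 1] with n hn
      simp only [hg]
      rw [add_div, div_mul_eq_mul_div]
    have hrw : 1 / ((m + k : ℕ) : ℝ) * d + 0 = d / ((m + k : ℕ) : ℝ) := by ring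
    rw [← hrw]
    exact T.congr' heq
  have hle : ∀ᶠ n in atTop, g n ≤ Real.log (∑ i ∈ Finset.Icc 1 n, a i) / (n : ℝ) := by
    filter_upwards [eventually_ge_atTop m] with n hn
    have hn1 : 1 ≤ n := le_trans hm1 hn
    set q := (n - m) / (m + k) with hq
    have hle2 : m + q * (m + k) ≤ n := by
      have h := Nat.div_mul_le_self (n - m) (m + k)
      rw [← hq] at h
      omega
    have hSm : (0:ℝ) < ∑ i ∈ Finset.Icc 1 m, a i := peigne_S_pos a hpos hm1
    have ham : 0 < a m := hpos m hm1
    have hiter := peigne_iter k hk a hpos hsub hm q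
    have hmono := peigne_S_mono a hpos hle2
    have hbig : (a m / C) ^ q * (∑ i ∈ Finset.Icc 1 m, a i) ≤
        ∑ i ∈ Finset.Icc 1 n, a i := le_trans hiter hmono
    have hposl : (0:ℝ) < (a m / C) ^ q * (∑ i ∈ Finset.Icc 1 m, a i) := by positivity
    have hlog : (q:ℝ) * d + e ≤ Real.log (∑ i ∈ Finset.Icc 1 n, a i) := by
      have := Real.log_le_log hposl hbig
      rwa [Real.log_mul (by positivity) (ne_of_gt hSm), Real.log_pow,
        Real.log_div (ne_of_gt ham) (ne_of_gt hC0)] at this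
    have hn0 : (0:ℝ) < (n:ℝ) := by exact_mod_cast hn1
    simp only [hg]
    gcongr
  have h1 : Filter.liminf (fun n : ℕ => ((g n : ℝ) : EReal)) atTop
      = ((d / ((m + k : ℕ) : ℝ) : ℝ) : EReal) :=
    (EReal.tendsto_coe.mpr hgt).liminf_eq
  calc (((Real.log (a m) - Real.log C) / ((m + k : ℕ) : ℝ) : ℝ) : EReal)
      = Filter.liminf (fun n : ℕ => ((g n : ℝ) : EReal)) atTop := by rw [h1]
    _ ≤ _ := by
        exact Filter.liminf_le_liminf (by
          filter_upwards [hle] with n h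
          exact EReal.coe_le_coe_iff.mpr h)

-- liminf nonneg
lemma peigne_liminf_nonneg (a : ℕ → ℝ) (hpos : ∀ n : ℕ, 1 ≤ n → 0 < a n) :
    (0 : EReal) ≤ Filter.liminf
        (fun n : ℕ => ((Real.log (∑ i ∈ Finset.Icc 1 n, a i) / (n : ℝ) : ℝ) : EReal))
        Filter.atTop := by
  have hgt : Tendsto (fun n : ℕ => Real.log (a 1) / (n : ℝ)) atTop (nhds 0) :=
    tendsto_const_div_atTop_nhds_zero_nat _
  have h1 : Filter.liminf (fun n : ℕ => ((Real.log (a 1) / (n : ℝ) : ℝ) : EReal)) atTop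
      = ((0:ℝ) : EReal) := (EReal.tendsto_coe.mpr hgt).liminf_eq
  have h2 : ((0:ℝ) : EReal) = (0 : EReal) := rfl
  rw [← h2, ← h1]
  refine Filter.liminf_le_liminf ?_
  filter_upwards [eventually_ge_atTop 1] with n hn
  refine EReal.coe_le_coe_iff.mpr ?_
  have hS : 0 < ∑ i ∈ Finset.Icc 1 n, a i := peigne_S_pos a hpos hn
  have ha1 : a 1 ≤ ∑ i ∈ Finset.Icc 1 n, a i := by
    apply Finset.single_le_sum (fun i hi => (hpos i (Finset.mem_Icc.mp hi).1).le)
    exact Finset.mem_Icc.mpr ⟨le_refl 1, hn⟩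
  have : Real.log (a 1) ≤ Real.log (∑ i ∈ Finset.Icc 1 n, a i) :=
    Real.log_le_log (hpos 1 le_rfl) ha1
  gcongr

lemma peigne_limsup_le_liminf (k : ℕ) (hk : 1 ≤ k) (a : ℕ → ℝ)
    (hpos : ∀ n : ℕ, 1 ≤ n → 0 < a n)
    (hsub : ∀ n m : ℕ, 1 ≤ n → 1 ≤ m → k + 1 ≤ n + m →
      a n * a m ≤ ∑ j ∈ Finset.range (2 * k + 1), a (n + m - k + j)) :
    Filter.limsup
        (fun n : ℕ => ((Real.log (∑ i ∈ Finset.Icc 1 n, a i) / (n : ℝ) : ℝ) : EReal))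
        Filter.atTop ≤
      Filter.liminf
        (fun n : ℕ => ((Real.log (∑ i ∈ Finset.Icc 1 n, a i) / (n : ℝ) : ℝ) : EReal))
        Filter.atTop := by
  set F : ℕ → EReal :=
    fun n : ℕ => ((Real.log (∑ i ∈ Finset.Icc 1 n, a i) / (n : ℝ) : ℝ) : EReal) with hF
  have h0 : (0 : EReal) ≤ liminf F atTop := peigne_liminf_nonneg a hpos
  rcases le_or_gt (limsup F atTop) 0 with h | h
  · exact le_trans h h0
  -- main claim
  have main : ∀ x y : ℝ, 0 < x → (↑x : EReal) < limsup F atTop → y < x →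
      (↑y : EReal) ≤ liminf F atTop := by
    intro x y hx hxL hyx
    have hfreq : ∃ᶠ n in atTop, (↑x : EReal) < F n := frequently_lt_of_lt_limsup (by isBoundedDefault) hxL
    set C : ℝ := ((2 * k + 1 : ℕ) : ℝ) with hC
    have hC0 : (0:ℝ) < C := by positivity
    have hne : (Finset.Icc 1 k).Nonempty := by
      rw [Finset.nonempty_Icc]; exact hk
    set M : ℝ := (Finset.Icc 1 k).sup' hne a with hM
    have hM0 : 0 < M := by
      have : a 1 ≤ M := Finset.le_sup' a (Finset.mem_Icc.mpr ⟨le_rfl, hk⟩)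
      linarith [hpos 1 le_rfl]
    -- log n / n -> 0 for nat
    have hlogn : Tendsto (fun n : ℕ => Real.log n / (n : ℝ)) atTop (nhds 0) := by
      have := Real.isLittleO_log_id_atTop.tendsto_div_nhds_zero
      exact this.comp tendsto_natCast_atTop_atTop
    -- x*n - log n - c -> atTop  for any constant c
    have hatTop : ∀ c : ℝ, Tendsto (fun n : ℕ => x * n - Real.log n - c) atTop atTop := by
      intro c
      have h1 : Tendsto (fun n : ℕ => (n : ℝ) * (x - Real.log n / n)) atTop atTop := by
        apply Filter.Tendsto.atTop_mul_pos hx tendsto_natCast_atTop_atTop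
        simpa using (tendsto_const_nhds (x := x) (f := atTop (α := ℕ))).sub hlogn
      have h2 := tendsto_atTop_add_const_right atTop (-c) h1
      apply h2.congr'
      filter_upwards [eventually_ge_atTop 1] with n hn
      have hn0 : (n:ℝ) ≠ 0 := by positivity
      field_simp
      ring
    -- hfun -> x
    set hfun : ℕ → ℝ := fun n => (x * n - Real.log n - Real.log C) / ((n : ℝ) + k) with hhfun
    have htend : Tendsto hfun atTop (nhds x) := by
      have t1 : Tendsto (fun n : ℕ => (n:ℝ) / ((n:ℝ) + k)) atTop (nhds 1) :=
        tendsto_natCast_div_add_atTop (k : ℝ)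
      have t2 : Tendsto (fun n : ℕ => 1 / ((n:ℝ) + k)) atTop (nhds 0) := by
        apply Tendsto.div_atTop tendsto_const_nhds
        exact tendsto_atTop_add_const_right atTop (k:ℝ) tendsto_natCast_atTop_atTop
      have t3 : Tendsto (fun n : ℕ =>
          x * ((n:ℝ) / ((n:ℝ) + k)) - (Real.log n / n) * ((n:ℝ) / ((n:ℝ) + k))
            - Real.log C * (1 / ((n:ℝ) + k))) atTop
          (nhds (x * 1 - 0 * 1 - Real.log C * 0)) := by
        exact (((tendsto_const_nhds.mul t1).sub (hlogn.mul t1)).sub (tendsto_const_nhds.mul t2))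
      have : x * 1 - 0 * 1 - Real.log C * 0 = x := by ring
      rw [this] at t3
      apply t3.congr'
      filter_upwards [eventually_ge_atTop 1] with n hn
      have hn0 : (n:ℝ) ≠ 0 := by positivity
      have hnk : (n:ℝ) + k ≠ 0 := by positivity
      simp only [hhfun]
      field_simp
      try ring
    -- eventual conditions
    have hev : ∀ᶠ n : ℕ in atTop, 1 ≤ n ∧ y ≤ hfun n ∧
        0 < x * n - Real.log n - Real.log C ∧ Real.log M < x * n - Real.log n := by
      filter_upwards [eventually_ge_atTop 1, htend.eventually_const_le hyx,
        (hatTop (Real.log C)).eventually_gt_atTop 0,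
        (hatTop 0).eventually_gt_atTop (Real.log M)] with n h1 h2 h3 h4
      refine ⟨h1, h2, h3, by linarith⟩
    obtain ⟨n, hFn, hn1, hyf, hnum, hMn⟩ := (hfreq.and_eventually hev).exists
    -- from F n > x : log S n > x * n
    set S : ℝ := ∑ i ∈ Finset.Icc 1 n, a i with hS
    have hSpos : 0 < S := peigne_S_pos a hpos hn1
    have hn0 : (0:ℝ) < (n:ℝ) := by exact_mod_cast hn1
    have hfn : x < Real.log S / n := by
      have h5 := hFn
      simp only [hF] at h5
      rw [hS]
      exact_mod_cast h5
    have hlogS : x * n < Real.log S := by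
      rw [lt_div_iff₀ hn0] at hfn
      linarith
    -- exists i with S / n ≤ a i
    have hex : ∃ i ∈ Finset.Icc 1 n, S / n ≤ a i := by
      apply Finset.exists_le_of_sum_le (Finset.nonempty_Icc.mpr hn1)
      rw [Finset.sum_const, Nat.card_Icc]
      have : (n + 1 - 1) = n := by omega
      rw [this, nsmul_eq_mul]
      rw [mul_div_cancel₀]
      exact ne_of_gt hn0
    obtain ⟨i, hiIcc, hai⟩ := hex
    obtain ⟨hi1, hin⟩ := Finset.mem_Icc.mp hiIcc
    -- S / n > M
    have hexp : Real.exp (x * n) < S := by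
      have : S = Real.exp (Real.log S) := (Real.exp_log hSpos).symm
      rw [this]
      exact Real.exp_lt_exp.mpr hlogS
    have hMS : M < S / n := by
      rw [lt_div_iff₀ hn0]
      calc M * n = Real.exp (Real.log M + Real.log n) := by
            rw [Real.exp_add, Real.exp_log hM0, Real.exp_log hn0]
        _ < Real.exp (x * n) := Real.exp_lt_exp.mpr (by linarith)
        _ < S := hexp
    -- i > k
    have hik : k ≤ i := by
      by_contra hcon
      push_neg at hcon
      have hiM : a i ≤ M := Finset.le_sup' a (Finset.mem_Icc.mpr ⟨hi1, by omega⟩)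
      linarith
    -- apply liminf bound
    have hkey := peigne_liminf_ge k hk a hpos hsub hik
    refine le_trans ?_ hkey
    rw [EReal.coe_le_coe_iff]
    have hlogai : x * n - Real.log n ≤ Real.log (a i) := by
      have h6 : (0:ℝ) < S / n := by positivity
      have h7 := Real.log_le_log h6 hai
      rw [Real.log_div (ne_of_gt hSpos) (ne_of_gt hn0)] at h7
      linarith
    have hcast : ((i + k : ℕ) : ℝ) = (i:ℝ) + k := by push_cast; ring
    rw [← hC, hcast]
    have d1 : (0:ℝ) < (i:ℝ) + k := by positivity
    have d2 : (i:ℝ) + k ≤ (n:ℝ) + k := by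
      have h8 : (i:ℝ) ≤ (n:ℝ) := by exact_mod_cast hin
      linarith
    calc y ≤ hfun n := hyf
      _ ≤ (Real.log (a i) - Real.log C) / ((i:ℝ) + k) := by
          simp only [hhfun]
          exact div_le_div₀ (by linarith) (by linarith) d1 d2
  by_contra hcon
  push_neg at hcon
  have ht : max (liminf F atTop) 0 < limsup F atTop := max_lt hcon h
  obtain ⟨x, hx1, hx2⟩ := EReal.exists_between_coe_real ht
  have hx0 : (0:ℝ) < x := by
    have h9 : ((0:ℝ):EReal) < ↑x := lt_of_le_of_lt (le_max_right _ _) hx1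
    exact_mod_cast h9
  have hlx : liminf F atTop < ↑x := lt_of_le_of_lt (le_max_left _ _) hx1
  obtain ⟨y, hy1, hy2⟩ := EReal.exists_between_coe_real hlx
  have hres := main x y hx0 hx2 (by exact_mod_cast hy2)
  exact absurd hres (not_le.mpr hy1)

lemma peigne_b_bound (k : ℕ) (hk : 1 ≤ k) (a : ℕ → ℝ)
    (hpos : ∀ n : ℕ, 1 ≤ n → 0 < a n)
    (hsub : ∀ n m : ℕ, 1 ≤ n → 1 ≤ m → k + 1 ≤ n + m →
      a n * a m ≤ ∑ j ∈ Finset.range (2 * k + 1), a (n + m - k + j))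
    (w : ℝ) (hw : 0 ≤ w)
    (hlimsup : Filter.limsup
        (fun n : ℕ => ((Real.log (∑ i ∈ Finset.Icc 1 n, a i) / (n : ℝ) : ℝ) : EReal))
        Filter.atTop ≤ ((w : ℝ) : EReal)) :
    ∀ N : ℕ, k + 1 ≤ N →
      a N * Real.exp (-((N:ℝ) * w)) ≤ 2 * (((2 * k + 1 : ℕ) : ℝ) * Real.exp ((k:ℝ) * w)) := by
  set C : ℝ := ((2 * k + 1 : ℕ) : ℝ) with hCdef
  have hC0 : (0:ℝ) < C := by positivity
  set E : ℝ := Real.exp ((k:ℝ) * w) with hEdef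
  have hE0 : (0:ℝ) < E := Real.exp_pos _
  have hE1 : (1:ℝ) ≤ E := Real.one_le_exp (by positivity)
  set D : ℝ := C * E with hDdef
  have hD0 : (0:ℝ) < D := by positivity
  have hD1 : (1:ℝ) ≤ D := by
    have : (1:ℝ) ≤ C := by
      rw [hCdef]; exact_mod_cast Nat.one_le_iff_ne_zero.mpr (by omega)
    nlinarith
  intro N hN1
  by_contra hcon
  push_neg at hcon
  -- the inductive construction
  have ind : ∀ i : ℕ, ∃ n : ℕ, k + 1 ≤ n ∧ N + i ≤ n ∧ n + k ≤ (N + k) * 2 ^ i ∧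
      (2:ℝ) ^ (2 ^ i) * D ≤ a n * Real.exp (-((n:ℝ) * w)) := by
    intro i
    induction i with
    | zero =>
      refine ⟨N, hN1, by omega, by simpa using le_refl (N + k), ?_⟩
      have : (2:ℝ) ^ (2 ^ 0) = 2 := by norm_num
      rw [this]
      exact hcon.le
    | succ i ih =>
      obtain ⟨n, hn1, hn2, hn3, hn4⟩ := ih
      have h1 := hsub n n (by omega) (by omega) (by omega)
      have hsum : ∑ _j ∈ Finset.range (2 * k + 1), (a n * a n / C) ≤
          ∑ j ∈ Finset.range (2 * k + 1), a (n + n - k + j) := by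
        rw [Finset.sum_const, Finset.card_range, nsmul_eq_mul, ← hCdef,
          mul_div_cancel₀ _ (ne_of_gt hC0)]
        exact h1
      obtain ⟨j, hj, hj2⟩ := Finset.exists_le_of_sum_le
        ⟨0, Finset.mem_range.mpr (by omega)⟩ hsum
      have hjlt : j < 2 * k + 1 := Finset.mem_range.mp hj
      refine ⟨n + n - k + j, by omega, by omega, ?_, ?_⟩
      · -- n + n - k + j + k ≤ (N+k)*2^(i+1)
        have e1 : (N + k) * 2 ^ (i + 1) = 2 * ((N + k) * 2 ^ i) := by ring
        have e2 : n + n - k + j + k ≤ 2 * (n + k) := by omega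
        have e3 : 2 * (n + k) ≤ 2 * ((N + k) * 2 ^ i) := by omega
        omega
      · set m := n + n - k + j with hm
        have hm1 : 1 ≤ m := by omega
        have hmle : (m:ℝ) ≤ 2 * (n:ℝ) + k := by
          have : m ≤ 2 * n + k := by omega
          push_cast
          exact_mod_cast this
        have hexple : Real.exp (-((2 * (n:ℝ) + k) * w)) ≤ Real.exp (-((m:ℝ) * w)) := by
          apply Real.exp_le_exp.mpr
          nlinarith
        have hbm : a n * a n / C * Real.exp (-((2 * (n:ℝ) + k) * w)) ≤
            a m * Real.exp (-((m:ℝ) * w)) := by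
          apply mul_le_mul hj2 hexple (Real.exp_pos _).le (hpos m hm1).le
        have e1 : Real.exp (-((2 * (n:ℝ) + k) * w)) =
            Real.exp (-((n:ℝ) * w)) * Real.exp (-((n:ℝ) * w)) * E⁻¹ := by
          rw [hEdef, ← Real.exp_neg, ← Real.exp_add, ← Real.exp_add]
          congr 1
          ring
        have heq : a n * a n / C * Real.exp (-((2 * (n:ℝ) + k) * w)) =
            (a n * Real.exp (-((n:ℝ) * w))) ^ 2 * E⁻¹ / C := by
          rw [e1]; ring
        have hbn2 : ((2:ℝ) ^ (2 ^ i) * D) ^ 2 ≤ (a n * Real.exp (-((n:ℝ) * w))) ^ 2 := by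
          apply pow_le_pow_left₀ (by positivity) hn4
        have hEinv : E * E⁻¹ = 1 := mul_inv_cancel₀ (ne_of_gt hE0)
        have hfin : (2:ℝ) ^ (2 ^ (i + 1)) * D ≤
            (a n * Real.exp (-((n:ℝ) * w))) ^ 2 * E⁻¹ / C := by
          have hpow : ((2:ℝ) ^ (2 ^ i)) ^ 2 = (2:ℝ) ^ (2 ^ (i + 1)) := by
            have h10 : 2 ^ i * 2 = 2 ^ (i + 1) := by rw [pow_succ]
            rw [← pow_mul, h10]
          have key2 : ((2:ℝ) ^ (2 ^ i) * D) ^ 2 * E⁻¹ * C⁻¹ = ((2:ℝ) ^ (2 ^ i)) ^ 2 * D := by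
            rw [hDdef]
            field_simp
          rw [div_eq_mul_inv, ← hpow, ← key2]
          apply mul_le_mul_of_nonneg_right
            (mul_le_mul_of_nonneg_right hbn2 (by positivity)) (by positivity)
        calc (2:ℝ) ^ (2 ^ (i + 1)) * D
            ≤ (a n * Real.exp (-((n:ℝ) * w))) ^ 2 * E⁻¹ / C := hfin
          _ = a n * a n / C * Real.exp (-((2 * (n:ℝ) + k) * w)) := heq.symm
          _ ≤ a m * Real.exp (-((m:ℝ) * w)) := hbm
  -- derive contradiction with limsup
  set δ : ℝ := Real.log 2 / ((N + k : ℕ) : ℝ) with hδ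
  have hδ0 : 0 < δ := by
    rw [hδ]
    apply div_pos (Real.log_pos one_lt_two)
    positivity
  have hfr : ∃ᶠ n in atTop, ((w + δ : ℝ) : EReal) ≤
      ((Real.log (∑ i ∈ Finset.Icc 1 n, a i) / (n : ℝ) : ℝ) : EReal) := by
    rw [Filter.frequently_atTop]
    intro i
    obtain ⟨n, hn1, hn2, hn3, hn4⟩ := ind i
    refine ⟨n, by omega, ?_⟩
    rw [EReal.coe_le_coe_iff]
    have hn0 : (0:ℝ) < (n:ℝ) := by
      have : (1:ℕ) ≤ n := by omega
      exact_mod_cast this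
    have han : 0 < a n := hpos n (by omega)
    have hS : 0 < ∑ i ∈ Finset.Icc 1 n, a i := by
      calc (0:ℝ) < a n := han
        _ ≤ _ := Finset.single_le_sum (fun i hi => (hpos i (Finset.mem_Icc.mp hi).1).le)
            (Finset.mem_Icc.mpr ⟨by omega, le_refl n⟩)
    have hlogbn : (2:ℝ) ^ i * Real.log 2 ≤ Real.log (a n * Real.exp (-((n:ℝ) * w))) := by
      have h2 := Real.log_le_log (by positivity) hn4
      rw [Real.log_mul (by positivity) (ne_of_gt hD0), Real.log_pow] at h2
      have hlogD : 0 ≤ Real.log D := Real.log_nonneg hD1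
      push_cast at h2
      linarith
    have hlogan : (2:ℝ) ^ i * Real.log 2 + (n:ℝ) * w ≤ Real.log (a n) := by
      have h3 : Real.log (a n * Real.exp (-((n:ℝ) * w))) =
          Real.log (a n) - (n:ℝ) * w := by
        rw [Real.log_mul (ne_of_gt han) (Real.exp_ne_zero _), Real.log_exp]
        ring
      rw [h3] at hlogbn
      linarith
    have hlogS : (2:ℝ) ^ i * Real.log 2 + (n:ℝ) * w ≤
        Real.log (∑ i ∈ Finset.Icc 1 n, a i) := by
      refine le_trans hlogan (Real.log_le_log han ?_)
      exact Finset.single_le_sum (fun i hi => (hpos i (Finset.mem_Icc.mp hi).1).le)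
        (Finset.mem_Icc.mpr ⟨by omega, le_refl n⟩)
    have hnle : (n:ℝ) ≤ ((N + k : ℕ) : ℝ) * 2 ^ i := by
      have h5 : n ≤ (N + k) * 2 ^ i := by omega
      have := (Nat.cast_le (α := ℝ)).mpr h5
      push_cast at this ⊢
      linarith
    have hNk0 : (0:ℝ) < ((N + k : ℕ) : ℝ) := by positivity
    have hl2 : (0:ℝ) < Real.log 2 := Real.log_pos one_lt_two
    have hfrac : δ * (n:ℝ) ≤ (2:ℝ) ^ i * Real.log 2 := by
      rw [hδ, div_mul_eq_mul_div, div_le_iff₀ hNk0]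
      nlinarith [hnle]
    have hstep : w + δ ≤ ((2:ℝ) ^ i * Real.log 2 + (n:ℝ) * w) / (n:ℝ) := by
      rw [le_div_iff₀ hn0]
      nlinarith [hfrac]
    calc w + δ ≤ ((2:ℝ) ^ i * Real.log 2 + (n:ℝ) * w) / (n:ℝ) := hstep
      _ ≤ Real.log (∑ i ∈ Finset.Icc 1 n, a i) / (n:ℝ) := by gcongr
  have hle := Filter.le_limsup_of_frequently_le hfr
  have : ((w + δ : ℝ) : EReal) ≤ ((w : ℝ) : EReal) := le_trans hle hlimsup
  rw [EReal.coe_le_coe_iff] at this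
  linarith


/-- a sub-multiplicativity lemma of Peigné: the exponential growth
rate of the partial sums exists and bounds the sequence from above. -/
theorem peigne_submultiplicative_lemma
    (k : ℕ) (hk : 1 ≤ k) (a : ℕ → ℝ)
    (hpos : ∀ n : ℕ, 1 ≤ n → 0 < a n)
    (hsub : ∀ n m : ℕ, 1 ≤ n → 1 ≤ m → k + 1 ≤ n + m →
      a n * a m ≤ ∑ j ∈ Finset.range (2 * k + 1), a (n + m - k + j)) :
    ∃ ω : EReal,
      Filter.Tendsto
        (fun n : ℕ => ((Real.log (∑ i ∈ Finset.Icc 1 n, a i) / (n : ℝ) : ℝ) : EReal))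
        Filter.atTop (nhds ω) ∧
      (ω < ⊤ → ∃ c : ℝ, 0 < c ∧ ∀ n : ℕ, 1 ≤ n →
        a n ≤ c * Real.exp ((n : ℝ) * ω.toReal)) := by
  set F : ℕ → EReal :=
    fun n : ℕ => ((Real.log (∑ i ∈ Finset.Icc 1 n, a i) / (n : ℝ) : ℝ) : EReal) with hF
  have hls := peigne_limsup_le_liminf k hk a hpos hsub
  have hli : Filter.liminf F Filter.atTop ≤ Filter.limsup F Filter.atTop :=
    Filter.liminf_le_limsup
  have heq : Filter.liminf F Filter.atTop = Filter.limsup F Filter.atTop :=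
    le_antisymm hli hls
  refine ⟨Filter.limsup F Filter.atTop, tendsto_of_liminf_eq_limsup heq rfl, ?_⟩
  intro htop
  set ω := Filter.limsup F Filter.atTop with hω
  have h0 : (0:EReal) ≤ ω := le_trans (peigne_liminf_nonneg a hpos) hli
  have hbot : ω ≠ ⊥ := by
    intro hcontra
    rw [hcontra] at h0
    exact absurd h0 (by simp)
  set w : ℝ := ω.toReal with hwdef
  have hwω : ((w:ℝ):EReal) = ω := EReal.coe_toReal (ne_of_lt htop) hbot
  have hw0 : 0 ≤ w := by
    have h11 : ((0:ℝ):EReal) ≤ ((w:ℝ):EReal) := by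
      rw [hwω]
      exact_mod_cast h0
    exact_mod_cast h11
  have hb := peigne_b_bound k hk a hpos hsub w hw0 (le_of_eq hwω.symm)
  have hne : (Finset.Icc 1 k).Nonempty := by
    rw [Finset.nonempty_Icc]; exact hk
  set M : ℝ := (Finset.Icc 1 k).sup' hne a with hM
  set c : ℝ := max (2 * (((2 * k + 1 : ℕ) : ℝ) * Real.exp ((k:ℝ) * w))) M with hc
  have hc0 : 0 < c := by
    have : (0:ℝ) < 2 * (((2 * k + 1 : ℕ) : ℝ) * Real.exp ((k:ℝ) * w)) := by positivity
    exact lt_of_lt_of_le this (le_max_left _ _)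
  refine ⟨c, hc0, ?_⟩
  intro n hn1
  have hexp1 : (1:ℝ) ≤ Real.exp ((n:ℝ) * w) := Real.one_le_exp (by positivity)
  by_cases hnk : n ≤ k
  · have h1 : a n ≤ M := Finset.le_sup' a (Finset.mem_Icc.mpr ⟨hn1, hnk⟩)
    calc a n ≤ M := h1
      _ ≤ c := le_max_right _ _
      _ = c * 1 := (mul_one c).symm
      _ ≤ c * Real.exp ((n:ℝ) * w) := by
          exact mul_le_mul_of_nonneg_left hexp1 hc0.le
  · push_neg at hnk
    have h2 := hb n (by omega)
    have h3 : a n * Real.exp (-((n:ℝ) * w)) ≤ c :=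
      le_trans h2 (le_max_left _ _)
    have h4 : a n = a n * Real.exp (-((n:ℝ) * w)) * Real.exp ((n:ℝ) * w) := by
      rw [mul_assoc, ← Real.exp_add]
      simp
    rw [h4]
    exact mul_le_mul_of_nonneg_right h3 (Real.exp_pos _).le
end
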